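/- arXiv:math/0311324 — 4 statements merged into one kernel-verified Lean document; each statement's English description precedes it below -/
import Mathlib

section
/- Let (Ω,Σ,μ) be a nonatomic probability space, 1 ≤ p < ∞, and X a Banach space. Every compact bounded linear operator T: L_p(Ω,Σ,μ) → X is hereditarily PP-narrow (HPP-narrow). -/
open MeasureTheory ENNReal Set Filter

noncomputable section

variable {Ω : Type*} [MeasurableSpace Ω]

/-- `f ∈ L_p(μ)` is a *sign supported on* `A`: `f = χ_{B₁} - χ_{B₂}` where `B₁, B₂`
form a partition of `A` into two measurable subsets of equal measure. -/
def IsSignOn (μ : Measure Ω) [IsFiniteMeasure μ] (p : ℝ≥0∞) [Fact (1 ≤ p)]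
    (f : Lp ℝ p μ) (A : Set Ω) : Prop :=
  ∃ (B₁ B₂ : Set Ω) (h₁ : MeasurableSet B₁) (h₂ : MeasurableSet B₂),
    Disjoint B₁ B₂ ∧ B₁ ∪ B₂ = A ∧ μ B₁ = μ B₂ ∧
    f = indicatorConstLp p h₁ (measure_ne_top μ B₁) (1 : ℝ) -
        indicatorConstLp p h₂ (measure_ne_top μ B₂) (1 : ℝ)

/-- `T : L_p(μ) → X` is *PP-narrow*: for every measurable `A` of nonzero measure and
every `ε > 0` there is a sign `f` supported on `A` with `‖T f‖ ≤ ε`. -/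
def PPNarrow (μ : Measure Ω) [IsFiniteMeasure μ] (p : ℝ≥0∞) [Fact (1 ≤ p)]
    {X : Type*} [NormedAddCommGroup X] [NormedSpace ℝ X]
    (T : Lp ℝ p μ →L[ℝ] X) : Prop :=
  ∀ A : Set Ω, MeasurableSet A → 0 < μ A →
    ∀ ε : ℝ, 0 < ε → ∃ f : Lp ℝ p μ, IsSignOn μ p f A ∧ ‖T f‖ ≤ ε

/-- `S` is a sub-σ-algebra (of the σ-algebra of `Ω`) consisting of subsets of `A`. -/
structure IsSubSigmaAlgebraOn (A : Set Ω) (S : Set (Set Ω)) : Prop where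
  measurable : ∀ B ∈ S, MeasurableSet B
  subset : ∀ B ∈ S, B ⊆ A
  top_mem : A ∈ S
  diff_mem : ∀ B ∈ S, A \ B ∈ S
  iUnion_mem : ∀ g : ℕ → Set Ω, (∀ n, g n ∈ S) → (⋃ n, g n) ∈ S

/-- `μ` is nonatomic on the family `S`: every member of positive measure has a member
subset of strictly smaller positive measure. -/
def NonatomicOn (μ : Measure Ω) (S : Set (Set Ω)) : Prop :=
  ∀ B ∈ S, 0 < μ B → ∃ C ∈ S, C ⊆ B ∧ 0 < μ C ∧ μ C < μ B

/-- `f` is a sign supported on `B` whose two halves belong to the family `S`. -/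
def IsSignIn (μ : Measure Ω) [IsFiniteMeasure μ] (p : ℝ≥0∞) [Fact (1 ≤ p)]
    (f : Lp ℝ p μ) (B : Set Ω) (S : Set (Set Ω)) : Prop :=
  ∃ B₁ ∈ S, ∃ B₂ ∈ S, ∃ (h₁ : MeasurableSet B₁) (h₂ : MeasurableSet B₂),
    Disjoint B₁ B₂ ∧ B₁ ∪ B₂ = B ∧ μ B₁ = μ B₂ ∧
    f = indicatorConstLp p h₁ (measure_ne_top μ B₁) (1 : ℝ) -
        indicatorConstLp p h₂ (measure_ne_top μ B₂) (1 : ℝ)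

/-- `T : L_p(μ) → X` is *hereditarily PP-narrow*: for every `A` of nonzero measure
and every sub-σ-algebra `S` of subsets of `A` on which `μ` is nonatomic, the
restriction of `T` to `L_p(A, S, μ)` is PP-narrow. -/
def HPPNarrow (μ : Measure Ω) [IsFiniteMeasure μ] (p : ℝ≥0∞) [Fact (1 ≤ p)]
    {X : Type*} [NormedAddCommGroup X] [NormedSpace ℝ X]
    (T : Lp ℝ p μ →L[ℝ] X) : Prop :=
  ∀ A : Set Ω, MeasurableSet A → 0 < μ A →
    ∀ S : Set (Set Ω), IsSubSigmaAlgebraOn A S → NonatomicOn μ S →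
      ∀ B ∈ S, 0 < μ B → ∀ ε : ℝ, 0 < ε →
        ∃ f : Lp ℝ p μ, IsSignIn μ p f B S ∧ ‖T f‖ ≤ ε

/-- A bounded linear operator is *compact* if it maps bounded sets to relatively
compact sets. -/
def CompactOp {E F : Type*} [NormedAddCommGroup E] [NormedSpace ℝ E]
    [NormedAddCommGroup F] [NormedSpace ℝ F] (T : E →L[ℝ] F) : Prop :=
  ∀ s : Set E, Bornology.IsBounded s → IsCompact (closure (T '' s))

open Topology

section Aux
variable {A : Set Ω} {S : Set (Set Ω)} (hS : IsSubSigmaAlgebraOn A S)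
include hS

lemma SSA.empty_mem : ∅ ∈ S := by
  have := hS.diff_mem A hS.top_mem
  simpa using this

lemma SSA.union_mem {B C : Set Ω} (hB : B ∈ S) (hC : C ∈ S) : B ∪ C ∈ S := by
  have h := hS.iUnion_mem (fun n => if n = 0 then B else C)
    (fun n => by by_cases h : n = 0 <;> simp [h, hB, hC])
  have : (⋃ n : ℕ, if n = 0 then B else C) = B ∪ C := by
    ext x
    simp only [Set.mem_iUnion, Set.mem_union]
    constructor
    · rintro ⟨n, hn⟩
      by_cases h : n = 0
      · simp [h] at hn; exact Or.inl hn
      · simp [h] at hn; exact Or.inr hn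
    · rintro (h | h)
      · exact ⟨0, by simp [h]⟩
      · exact ⟨1, by simp [h]⟩
  rwa [this] at h

lemma SSA.inter_mem {B C : Set Ω} (hB : B ∈ S) (hC : C ∈ S) : B ∩ C ∈ S := by
  have key : B ∩ C = A \ ((A \ B) ∪ (A \ C)) := by
    ext x
    constructor
    · rintro ⟨hxB, hxC⟩
      exact ⟨hS.subset B hB hxB, by simp [hxB, hxC]⟩
    · rintro ⟨hxA, hx⟩
      simp only [Set.mem_union, Set.mem_diff, not_or, not_and, not_not] at hx
      exact ⟨hx.1 hxA, hx.2 hxA⟩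
  rw [key]
  exact hS.diff_mem _ (SSA.union_mem hS (hS.diff_mem B hB) (hS.diff_mem C hC))

lemma SSA.sdiff_mem {B C : Set Ω} (hB : B ∈ S) (hC : C ∈ S) : B \ C ∈ S := by
  have key : B \ C = B ∩ (A \ C) := by
    ext x
    constructor
    · rintro ⟨hxB, hxC⟩
      exact ⟨hxB, hS.subset B hB hxB, hxC⟩
    · rintro ⟨hxB, _, hxC⟩
      exact ⟨hxB, hxC⟩
  rw [key]; exact SSA.inter_mem hS hB (hS.diff_mem C hC)

end Aux

section Sierp
variable {μ : Measure Ω} [IsFiniteMeasure μ] {A : Set Ω} {S : Set (Set Ω)}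
  (hS : IsSubSigmaAlgebraOn A S) (hNA : NonatomicOn μ S)
include hS hNA

/-- every positive member contains a member of at most half the measure, still positive -/
lemma SSA.half_small {B : Set Ω} (hB : B ∈ S) (hpos : 0 < μ B) :
    ∃ C ∈ S, C ⊆ B ∧ 0 < μ C ∧ μ C ≤ μ B * 2⁻¹ := by
  obtain ⟨C, hC, hCB, hCpos, hClt⟩ := hNA B hB hpos
  rcases le_or_gt (μ C) (μ B * 2⁻¹) with h | h
  · exact ⟨C, hC, hCB, hCpos, h⟩
  · refine ⟨B \ C, SSA.sdiff_mem hS hB hC, Set.diff_subset, ?_, ?_⟩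
    · have : μ (B \ C) = μ B - μ C :=
        measure_diff hCB (hS.measurable C hC).nullMeasurableSet (measure_ne_top μ C)
      rw [this]
      exact tsub_pos_of_lt hClt
    · have hd : μ (B \ C) = μ B - μ C :=
        measure_diff hCB (hS.measurable C hC).nullMeasurableSet (measure_ne_top μ C)
      rw [hd]
      have h2 : μ B - μ C ≤ μ B - μ B * 2⁻¹ := tsub_le_tsub_left h.le _
      calc μ B - μ C ≤ μ B - μ B * 2⁻¹ := h2
        _ = μ B - μ B / 2 := by rw [div_eq_mul_inv]
        _ = μ B / 2 := ENNReal.sub_half (measure_ne_top μ B)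
        _ = μ B * 2⁻¹ := by rw [div_eq_mul_inv]

/-- members of arbitrarily small positive measure -/
lemma SSA.small {B : Set Ω} (hB : B ∈ S) (hpos : 0 < μ B) {δ : ℝ≥0∞} (hδ : 0 < δ) :
    ∃ D ∈ S, D ⊆ B ∧ 0 < μ D ∧ μ D ≤ δ := by
  have key : ∀ n : ℕ, ∃ D ∈ S, D ⊆ B ∧ 0 < μ D ∧ μ D ≤ μ B * 2⁻¹ ^ n := by
    intro n
    induction n with
    | zero => exact ⟨B, hB, subset_rfl, hpos, by simp⟩
    | succ n ih =>
      obtain ⟨D, hD, hDB, hDpos, hDle⟩ := ih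
      obtain ⟨C, hC, hCD, hCpos, hCle⟩ := SSA.half_small hS hNA hD hDpos
      refine ⟨C, hC, hCD.trans hDB, hCpos, ?_⟩
      calc μ C ≤ μ D * 2⁻¹ := hCle
        _ ≤ μ B * 2⁻¹ ^ n * 2⁻¹ := mul_le_mul_left hDle _
        _ = μ B * 2⁻¹ ^ (n + 1) := by rw [pow_succ, mul_assoc]
  -- choose n with μ B * 2⁻¹ ^ n ≤ δ
  obtain ⟨n, hn⟩ : ∃ n : ℕ, μ B * 2⁻¹ ^ n ≤ δ := by
    have hμB : μ B ≠ ⊤ := measure_ne_top μ B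
    obtain ⟨n, hn⟩ := ENNReal.exists_inv_two_pow_lt (a := δ / (μ B + 1)) (by
      simp only [ne_eq, ENNReal.div_eq_zero_iff, not_or]
      exact ⟨hδ.ne', by simp [hμB]⟩)
    refine ⟨n, ?_⟩
    have h1 : μ B * 2⁻¹ ^ n ≤ (μ B + 1) * (δ / (μ B + 1)) :=
      mul_le_mul' le_self_add hn.le
    have h2 : (μ B + 1) * (δ / (μ B + 1)) ≤ δ := ENNReal.mul_div_le
    exact h1.trans h2
  obtain ⟨D, hD, hDB, hDpos, hDle⟩ := key n
  exact ⟨D, hD, hDB, hDpos, hDle.trans hn⟩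

end Sierp

section Sierp
variable {μ : Measure Ω} [IsFiniteMeasure μ] {A : Set Ω} {S : Set (Set Ω)}
  (hS : IsSubSigmaAlgebraOn A S) (hNA : NonatomicOn μ S)
include hS hNA

/-- Sierpiński-type theorem inside the family `S`. -/
lemma SSA.exists_measure_eq {B : Set Ω} (hB : B ∈ S) {t : ℝ≥0∞} (ht : t ≤ μ B) :
    ∃ C ∈ S, C ⊆ B ∧ μ C = t := by
  classical
  have htop : t ≠ ⊤ := (ht.trans_lt (measure_lt_top μ B)).ne
  -- the "gain" available from a current set C
  set G : Set Ω → ℝ≥0∞ := fun C => sSup {x | ∃ D ∈ S, D ⊆ B \ C ∧ μ C + μ D ≤ t ∧ μ D = x}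
    with hG
  have hGle : ∀ C, μ C ≤ t → G C ≤ t := by
    intro C _
    refine sSup_le ?_
    rintro x ⟨D, _, _, hsum, rfl⟩
    exact le_trans le_add_self hsum
  -- greedy step
  have step : ∀ C : Set Ω, ∃ C' : Set Ω, (C ∈ S ∧ C ⊆ B ∧ μ C ≤ t) →
      (C' ∈ S ∧ C' ⊆ B ∧ μ C' ≤ t) ∧ C ⊆ C' ∧ μ C + G C / 2 ≤ μ C' := by
    intro C
    by_cases hC : C ∈ S ∧ C ⊆ B ∧ μ C ≤ t
    · obtain ⟨hCS, hCB, hCt⟩ := hC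
      by_cases hG0 : G C = 0
      · exact ⟨C, fun _ => ⟨⟨hCS, hCB, hCt⟩, subset_rfl, by rw [hG0]; simp⟩⟩
      · have hGtop : G C ≠ ⊤ := ((hGle C hCt).trans_lt (lt_top_iff_ne_top.mpr htop)).ne
        have hlt : G C / 2 < G C := ENNReal.half_lt_self hG0 hGtop
        obtain ⟨x, ⟨D, hDS, hDB, hsum, rfl⟩, hx⟩ := lt_sSup_iff.mp hlt
        refine ⟨C ∪ D, fun _ => ⟨⟨SSA.union_mem hS hCS hDS,
          union_subset hCB (hDB.trans diff_subset), ?_⟩, subset_union_left, ?_⟩⟩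
        · have : μ (C ∪ D) ≤ μ C + μ D := measure_union_le _ _
          exact this.trans hsum
        · have hdisj : Disjoint C D := (disjoint_sdiff_right.mono_left subset_rfl).mono_right hDB
          have : μ (C ∪ D) = μ C + μ D :=
            measure_union hdisj (hS.measurable D hDS)
          rw [this]
          exact add_le_add_right hx.le _
    · exact ⟨∅, fun h => absurd h hC⟩
  choose f hf using step
  -- the increasing sequence
  set c : ℕ → Set Ω := fun n => Nat.rec ∅ (fun _ C => f C) n with hc
  have hc0 : c 0 = ∅ := rfl
  have hcs : ∀ n, c (n + 1) = f (c n) := fun n => rfl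
  have inv : ∀ n, c n ∈ S ∧ c n ⊆ B ∧ μ (c n) ≤ t := by
    intro n
    induction n with
    | zero => rw [hc0]; exact ⟨SSA.empty_mem hS, empty_subset _, by simp⟩
    | succ n ih => rw [hcs]; exact ((hf (c n)) ih).1
  have mono : ∀ n, c n ⊆ c (n + 1) := fun n => (hf (c n) (inv n)).2.1
  have cmono : Monotone c := monotone_nat_of_le_succ mono
  have gain : ∀ n, μ (c n) + G (c n) / 2 ≤ μ (c (n + 1)) := fun n => (hf (c n) (inv n)).2.2
  set Cinf : Set Ω := ⋃ n, c n with hCinf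
  have hCS : Cinf ∈ S := hS.iUnion_mem c fun n => (inv n).1
  have hCB : Cinf ⊆ B := iUnion_subset fun n => (inv n).2.1
  have hμle : μ Cinf ≤ t := by
    rw [hCinf, (cmono.directed_le).measure_iUnion]
    exact iSup_le fun n => (inv n).2.2
  refine ⟨Cinf, hCS, hCB, ?_⟩
  by_contra hne
  have hlt : μ Cinf < t := lt_of_le_of_ne hμle hne
  -- find a small positive member of S inside B \ Cinf
  have hposdiff : 0 < μ (B \ Cinf) := by
    have : μ (B \ Cinf) = μ B - μ Cinf :=
      measure_diff hCB (hS.measurable _ hCS).nullMeasurableSet (measure_ne_top μ Cinf)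
    rw [this]
    exact tsub_pos_of_lt (hlt.trans_le ht)
  obtain ⟨D, hDS, hDB, hDpos, hDle⟩ := SSA.small hS hNA (SSA.sdiff_mem hS hB hCS) hposdiff
    (tsub_pos_of_lt hlt)
  -- D is a candidate at every stage
  have hcand : ∀ n, μ D ≤ G (c n) := by
    intro n
    refine le_sSup ⟨D, hDS, hDB.trans (diff_subset_diff_right (subset_iUnion c n)), ?_, rfl⟩
    calc μ (c n) + μ D ≤ μ Cinf + (t - μ Cinf) :=
          add_le_add (measure_mono (subset_iUnion c n)) hDle
      _ = t := add_tsub_cancel_of_le hlt.le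
  have growth : ∀ n : ℕ, (n : ℝ≥0∞) * (μ D / 2) ≤ μ (c n) := by
    intro n
    induction n with
    | zero => simp
    | succ n ih =>
      have : ((n : ℝ≥0∞) + 1) * (μ D / 2) = (n : ℝ≥0∞) * (μ D / 2) + μ D / 2 := by ring
      push_cast
      rw [this]
      calc (n : ℝ≥0∞) * (μ D / 2) + μ D / 2 ≤ μ (c n) + μ D / 2 := add_le_add_left ih _
        _ ≤ μ (c n) + G (c n) / 2 := add_le_add_right (ENNReal.div_le_div_right (hcand n) 2) _
        _ ≤ μ (c (n + 1)) := gain n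
  -- contradiction with archimedean property
  have hd2 : μ D / 2 ≠ 0 := (ENNReal.half_pos hDpos.ne').ne'
  have hd2top : μ D / 2 ≠ ⊤ := by
    have : μ D ≠ ⊤ := measure_ne_top μ D
    simp [ENNReal.div_eq_top, this]
  obtain ⟨n, hn⟩ := ENNReal.exists_nat_gt (ENNReal.div_lt_top htop hd2).ne
  have : t < (n : ℝ≥0∞) * (μ D / 2) := by
    rwa [← ENNReal.div_lt_iff (Or.inl hd2) (Or.inl hd2top)]
  exact absurd ((this.trans_le (growth n)).trans_le (inv n).2.2) (lt_irrefl t)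

lemma SSA.halve {B : Set Ω} (hB : B ∈ S) :
    ∃ C ∈ S, C ⊆ B ∧ μ C = μ B / 2 ∧ μ (B \ C) = μ B / 2 := by
  obtain ⟨C, hC, hCB, hCeq⟩ := SSA.exists_measure_eq hS hNA hB (ENNReal.half_le_self (a := μ B))
  refine ⟨C, hC, hCB, hCeq, ?_⟩
  have : μ (B \ C) = μ B - μ C :=
    measure_diff hCB (hS.measurable C hC).nullMeasurableSet (measure_ne_top μ C)
  rw [this, hCeq, ENNReal.sub_half (measure_ne_top μ B)]

end Sierp

/-- dyadic cells determined by a halving function `h` starting from `B` -/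
def cellAux (h : Set Ω → Set Ω) (B : Set Ω) : ℕ → ℕ → Set Ω
  | 0, _ => B
  | n + 1, j =>
    if j % 2 = 0 then h (cellAux h B n (j / 2))
    else cellAux h B n (j / 2) \ h (cellAux h B n (j / 2))

section Cells
variable {μ : Measure Ω} [IsFiniteMeasure μ] {A : Set Ω} {S : Set (Set Ω)}
  {h : Set Ω → Set Ω} {B : Set Ω}
  (hS : IsSubSigmaAlgebraOn A S)
  (hh : ∀ C ∈ S, h C ∈ S ∧ h C ⊆ C ∧ μ (h C) = μ C / 2)
  (hB : B ∈ S)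

local notation "cl" => cellAux h B

include hS hh hB

lemma cell_spec : ∀ n, ∀ j < 2 ^ n, cl n j ∈ S ∧ μ (cl n j) = μ B * 2⁻¹ ^ n := by
  intro n
  induction n with
  | zero => intro j _; exact ⟨hB, by simp [cellAux]⟩
  | succ n ih =>
    intro j hj
    have hj2 : j / 2 < 2 ^ n := by
      rw [Nat.div_lt_iff_lt_mul (by norm_num)]
      calc j < 2 ^ (n + 1) := hj
        _ = 2 ^ n * 2 := by rw [pow_succ]
    obtain ⟨hmem, hmeas⟩ := ih (j / 2) hj2
    obtain ⟨hhm, hhsub, hhμ⟩ := hh _ hmem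
    have hhalf : μ B * 2⁻¹ ^ n / 2 = μ B * 2⁻¹ ^ (n + 1) := by
      rw [pow_succ, div_eq_mul_inv, mul_assoc]
    by_cases hpar : j % 2 = 0
    · rw [show cl (n+1) j = h (cl n (j/2)) from by simp [cellAux, hpar]]
      exact ⟨hhm, by rw [hhμ, hmeas, hhalf]⟩
    · rw [show cl (n+1) j = cl n (j/2) \ h (cl n (j/2)) from by simp [cellAux, hpar]]
      refine ⟨SSA.sdiff_mem hS hmem hhm, ?_⟩
      have : μ (cl n (j/2) \ h (cl n (j/2))) = μ (cl n (j/2)) - μ (h (cl n (j/2))) :=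
        measure_diff hhsub (hS.measurable _ hhm).nullMeasurableSet (measure_ne_top μ _)
      rw [this, hhμ, ENNReal.sub_half (measure_ne_top μ _), hmeas, hhalf]

lemma cell_subset_parent : ∀ n j, j < 2 ^ (n + 1) → cl (n + 1) j ⊆ cl n (j / 2) := by
  intro n j hj
  have hj2 : j / 2 < 2 ^ n := by
    rw [Nat.div_lt_iff_lt_mul (by norm_num)]
    calc j < 2 ^ (n + 1) := hj
      _ = 2 ^ n * 2 := by rw [pow_succ]
  have hmem := (cell_spec hS hh hB n (j / 2) hj2).1
  obtain ⟨_, hhsub, _⟩ := hh _ hmem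
  by_cases hpar : j % 2 = 0
  · rw [show cl (n+1) j = h (cl n (j/2)) from by simp [cellAux, hpar]]; exact hhsub
  · rw [show cl (n+1) j = cl n (j/2) \ h (cl n (j/2)) from by simp [cellAux, hpar]]
    exact diff_subset

lemma cell_split : ∀ n j, j < 2 ^ n →
    cl (n + 1) (2 * j) ∪ cl (n + 1) (2 * j + 1) = cl n j ∧
    Disjoint (cl (n + 1) (2 * j)) (cl (n + 1) (2 * j + 1)) := by
  intro n j hj
  have hmem := (cell_spec hS hh hB n j hj).1
  obtain ⟨_, hhsub, _⟩ := hh _ hmem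
  have e1 : cl (n+1) (2*j) = h (cl n j) := by
    simp [cellAux, Nat.mul_div_cancel_left j (by norm_num : 0 < 2), Nat.mul_mod_right]
  have e2 : cl (n+1) (2*j+1) = cl n j \ h (cl n j) := by
    have : (2*j+1) % 2 = 1 := by omega
    have h2 : (2*j+1) / 2 = j := by omega
    simp [cellAux, this, h2]
  rw [e1, e2]
  exact ⟨union_diff_cancel hhsub, disjoint_sdiff_right⟩

lemma cell_disjoint : ∀ n, ∀ j < 2 ^ n, ∀ k < 2 ^ n, j ≠ k → Disjoint (cl n j) (cl n k) := by
  intro n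
  induction n with
  | zero => intro j hj k hk hjk; omega
  | succ n ih =>
    intro j hj k hk hjk
    by_cases hq : j / 2 = k / 2
    · -- same parent, different parity
      have hpar : j % 2 ≠ k % 2 := by omega
      have hj2 : j / 2 < 2 ^ n := by
        rw [Nat.div_lt_iff_lt_mul (by norm_num)]; calc j < 2 ^ (n+1) := hj
                                                     _ = 2 ^ n * 2 := by rw [pow_succ]
      have hmem := (cell_spec hS hh hB n (j / 2) hj2).1
      have e : ∀ m, m < 2 ^ (n+1) → (cl (n+1) m = if m % 2 = 0 then h (cl n (m/2))
          else cl n (m/2) \ h (cl n (m/2))) := by intro m _; simp [cellAux]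
      rw [e j hj, e k hk, ← hq]
      rcases Nat.even_or_odd j with hje | hjo
      · have h1 : j % 2 = 0 := Nat.even_iff.mp hje
        have h2 : k % 2 ≠ 0 := by omega
        simp [h1, h2, disjoint_sdiff_right]
      · have h1 : j % 2 ≠ 0 := by have := Nat.odd_iff.mp hjo; omega
        have h2 : k % 2 = 0 := by have := Nat.odd_iff.mp hjo; omega
        simp [h1, h2, disjoint_sdiff_left]
    · have hj2 : j / 2 < 2 ^ n := by
        rw [Nat.div_lt_iff_lt_mul (by norm_num)]; calc j < 2 ^ (n+1) := hj
                                                     _ = 2 ^ n * 2 := by rw [pow_succ]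
      have hk2 : k / 2 < 2 ^ n := by
        rw [Nat.div_lt_iff_lt_mul (by norm_num)]; calc k < 2 ^ (n+1) := hk
                                                     _ = 2 ^ n * 2 := by rw [pow_succ]
      exact (ih (j/2) hj2 (k/2) hk2 hq).mono (cell_subset_parent hS hh hB n j hj)
        (cell_subset_parent hS hh hB n k hk)

end Cells

section Rsets
variable {μ : Measure Ω} [IsFiniteMeasure μ] {A : Set Ω} {S : Set (Set Ω)}
  {h : Set Ω → Set Ω} {B : Set Ω}
  (hS : IsSubSigmaAlgebraOn A S)
  (hh : ∀ C ∈ S, h C ∈ S ∧ h C ⊆ C ∧ μ (h C) = μ C / 2)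
  (hB : B ∈ S)

local notation "cl" => cellAux h B

/-- the union of the even cells at level `n+1` -/
def Rset (h : Set Ω → Set Ω) (B : Set Ω) (n : ℕ) : Set Ω :=
  ⋃ j ∈ Finset.range (2 ^ n), cellAux h B (n + 1) (2 * j)

local notation "Rs" => Rset h B

lemma inv2_cancel (x : ℝ≥0∞) (n : ℕ) : (2 : ℝ≥0∞) ^ n * (x * 2⁻¹ ^ n) = x := by
  rw [← ENNReal.inv_pow, mul_comm x, ← mul_assoc,
    ENNReal.mul_inv_cancel (pow_ne_zero _ two_ne_zero) (ENNReal.pow_ne_top ENNReal.ofNat_ne_top),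
    one_mul]

lemma inv2_add_inv2 (x : ℝ≥0∞) : x * 2⁻¹ + x * 2⁻¹ = x := by
  have h : (2⁻¹ : ℝ≥0∞) + 2⁻¹ = 1 := by
    rw [← two_mul, ENNReal.mul_inv_cancel two_ne_zero ENNReal.ofNat_ne_top]
  rw [← mul_add, h, mul_one]

include hS hh hB

lemma cell_subset_B : ∀ n, ∀ j < 2 ^ n, cl n j ⊆ B := by
  intro n
  induction n with
  | zero => intro j _; exact subset_rfl
  | succ n ih =>
    intro j hj
    have hj2 : j / 2 < 2 ^ n := by
      rw [Nat.div_lt_iff_lt_mul (by norm_num)]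
      calc j < 2 ^ (n + 1) := hj
        _ = 2 ^ n * 2 := by rw [pow_succ]
    exact (cell_subset_parent hS hh hB n j hj).trans (ih (j / 2) hj2)

lemma Rset_mem (n : ℕ) : Rs n ∈ S := by
  have key := hS.iUnion_mem (fun j => if j < 2 ^ n then cl (n + 1) (2 * j) else ∅)
    (fun j => by
      by_cases hj : j < 2 ^ n
      · simp only [hj, if_true]
        exact (cell_spec hS hh hB (n + 1) (2 * j) (by rw [pow_succ]; omega)).1
      · simp only [hj, if_false]
        exact SSA.empty_mem hS)
  have : (⋃ j, if j < 2 ^ n then cl (n + 1) (2 * j) else ∅) = Rs n := by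
    rw [Rset]
    ext x
    simp only [Set.mem_iUnion, Finset.mem_range]
    constructor
    · rintro ⟨j, hj⟩
      by_cases hlt : j < 2 ^ n
      · rw [if_pos hlt] at hj; exact ⟨j, hlt, hj⟩
      · rw [if_neg hlt] at hj; exact absurd hj (Set.notMem_empty x)
    · rintro ⟨j, hlt, hj⟩
      exact ⟨j, by rw [if_pos hlt]; exact hj⟩
  rwa [this] at key

lemma Rset_subset (n : ℕ) : Rs n ⊆ B := by
  rw [Rset]
  refine Set.iUnion₂_subset fun j hj => ?_
  rw [Finset.mem_range] at hj
  exact cell_subset_B hS hh hB (n + 1) (2 * j) (by rw [pow_succ]; omega)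

lemma Rset_measure (n : ℕ) : μ (Rs n) = μ B * 2⁻¹ := by
  rw [Rset, measure_biUnion_finset]
  · have heach : ∀ j ∈ Finset.range (2 ^ n), μ (cl (n + 1) (2 * j)) = μ B * 2⁻¹ * 2⁻¹ ^ n := by
      intro j hj
      rw [Finset.mem_range] at hj
      rw [(cell_spec hS hh hB (n + 1) (2 * j) (by rw [pow_succ]; omega)).2]
      ring
    rw [Finset.sum_congr rfl heach, Finset.sum_const, Finset.card_range, nsmul_eq_mul,
      Nat.cast_pow, Nat.cast_ofNat, inv2_cancel]
  · intro j hj k hk hjk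
    rw [Finset.mem_coe, Finset.mem_range] at hj hk
    exact cell_disjoint hS hh hB (n + 1) (2 * j) (by rw [pow_succ]; omega)
      (2 * k) (by rw [pow_succ]; omega) (by omega)
  · intro j hj
    rw [Finset.mem_range] at hj
    exact hS.measurable _ (cell_spec hS hh hB (n + 1) (2 * j) (by rw [pow_succ]; omega)).1

lemma cell_inter_Rset : ∀ d n, ∀ j < 2 ^ n, μ (cl n j ∩ Rs (n + d)) = μ (cl n j) * 2⁻¹ := by
  intro d
  induction d with
  | zero =>
    intro n j hj
    have hbase : cl n j ∩ Rs n = cl (n + 1) (2 * j) := by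
      apply subset_antisymm
      · rintro x ⟨hxc, hxR⟩
        rw [Rset] at hxR
        simp only [Set.mem_iUnion, Finset.mem_range] at hxR
        obtain ⟨k, hk, hxk⟩ := hxR
        rcases eq_or_ne k j with rfl | hne
        · exact hxk
        · exfalso
          have hsub := cell_subset_parent hS hh hB n (2 * k) (by rw [pow_succ]; omega)
          rw [show 2 * k / 2 = k by omega] at hsub
          exact (cell_disjoint hS hh hB n j hj k hk (Ne.symm hne)).le_bot ⟨hxc, hsub hxk⟩
      · refine Set.subset_inter ?_ ?_
        · have hsub := cell_subset_parent hS hh hB n (2 * j) (by rw [pow_succ]; omega)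
          rwa [show 2 * j / 2 = j by omega] at hsub
        · rw [Rset]
          exact Set.subset_iUnion₂ (s := fun k _ => cl (n + 1) (2 * k)) j
            (Finset.mem_range.mpr hj)
    rw [Nat.add_zero, hbase, (cell_spec hS hh hB (n + 1) (2 * j) (by rw [pow_succ]; omega)).2,
      (cell_spec hS hh hB n j hj).2]
    ring
  | succ d ih =>
    intro n j hj
    obtain ⟨hunion, hdisj⟩ := cell_split hS hh hB n j hj
    have h1 : 2 * j < 2 ^ (n + 1) := by rw [pow_succ]; omega
    have h2 : 2 * j + 1 < 2 ^ (n + 1) := by rw [pow_succ]; omega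
    have hrw : n + (d + 1) = (n + 1) + d := by omega
    have hsplit : cl n j ∩ Rs (n + (d + 1)) =
        (cl (n + 1) (2 * j) ∩ Rs ((n + 1) + d)) ∪ (cl (n + 1) (2 * j + 1) ∩ Rs ((n + 1) + d)) := by
      rw [hrw, ← Set.union_inter_distrib_right, hunion]
    rw [hsplit, measure_union ((hdisj.mono Set.inter_subset_left Set.inter_subset_left))
      ((hS.measurable _ (cell_spec hS hh hB (n + 1) (2 * j + 1) h2).1).inter
        (hS.measurable _ (Rset_mem hS hh hB ((n + 1) + d)))),
      ih (n + 1) (2 * j) h1, ih (n + 1) (2 * j + 1) h2,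
      (cell_spec hS hh hB (n + 1) (2 * j) h1).2, (cell_spec hS hh hB (n + 1) (2 * j + 1) h2).2,
      (cell_spec hS hh hB n j hj).2, inv2_add_inv2 (μ B * 2⁻¹ ^ (n + 1)), pow_succ]
    ring

lemma Rset_inter {i j : ℕ} (hij : i < j) : μ (Rs i ∩ Rs j) = μ B * 2⁻¹ * 2⁻¹ := by
  have hj : j = (i + 1) + (j - (i + 1)) := by omega
  rw [Rset, Set.iUnion₂_inter]
  rw [measure_biUnion_finset]
  · have heach : ∀ k ∈ Finset.range (2 ^ i),
        μ (cl (i + 1) (2 * k) ∩ Rs j) = (μ B * 2⁻¹ * 2⁻¹) * 2⁻¹ ^ i := by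
      intro k hk
      rw [Finset.mem_range] at hk
      have := cell_inter_Rset hS hh hB (j - (i + 1)) (i + 1) (2 * k) (by rw [pow_succ]; omega)
      rw [← hj] at this
      rw [this, (cell_spec hS hh hB (i + 1) (2 * k) (by rw [pow_succ]; omega)).2]
      ring
    rw [Finset.sum_congr rfl heach, Finset.sum_const, Finset.card_range, nsmul_eq_mul,
      Nat.cast_pow, Nat.cast_ofNat]
    exact inv2_cancel (μ B * 2⁻¹ * 2⁻¹) i
  · intro a ha b hb hab
    rw [Finset.mem_coe, Finset.mem_range] at ha hb
    exact ((cell_disjoint hS hh hB (i + 1) (2 * a) (by rw [pow_succ]; omega)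
      (2 * b) (by rw [pow_succ]; omega) (by omega)).mono
        Set.inter_subset_left Set.inter_subset_left)
  · intro a ha
    rw [Finset.mem_range] at ha
    exact (hS.measurable _ (cell_spec hS hh hB (i + 1) (2 * a) (by rw [pow_succ]; omega)).1).inter
      (hS.measurable _ (Rset_mem hS hh hB j))

end Rsets



section Lemmas2
variable {μ : Measure Ω} [IsProbabilityMeasure μ]

lemma sub_self_half (x : ℝ≥0∞) (hx : x ≠ ⊤) : x - x * 2⁻¹ = x * 2⁻¹ := by
  rw [← div_eq_mul_inv, ENNReal.sub_half hx, div_eq_mul_inv]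

lemma coeFn_finset_sum (p : ℝ≥0∞) [Fact (1 ≤ p)] (f : ℕ → Lp ℝ p μ) (s : Finset ℕ) :
    ⇑(∑ i ∈ s, f i) =ᵐ[μ] fun x => ∑ i ∈ s, f i x := by
  classical
  induction s using Finset.induction_on with
  | empty => simp only [Finset.sum_empty]; exact Lp.coeFn_zero ℝ p μ
  | insert a s hni ih =>
    rw [Finset.sum_insert hni]
    filter_upwards [Lp.coeFn_add (f a) (∑ i ∈ s, f i), ih] with x h1 h2
    rw [h1]
    simp only [Pi.add_apply, h2, Finset.sum_insert hni]
/-- generic L², L^∞ interpolation-type bound on `eLpNorm` -/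
lemma eLpNorm_le_of_sq {g : Ω → ℝ} (hmeas : AEStronglyMeasurable g μ)
    (hbd : ∀ x, |g x| ≤ 1) (hint : Integrable (fun x => g x ^ 2) μ)
    {a : ℝ} (ha : 0 ≤ a) (hia : ∫ x, g x ^ 2 ∂μ ≤ a)
    (p : ℝ≥0∞) [Fact (1 ≤ p)] (hp : p ≠ ∞) :
    eLpNorm g p μ ≤ (ENNReal.ofReal a) ^ (1 / max 2 p.toReal) := by
  have hp1 : 1 ≤ p := Fact.out
  have hp0 : p ≠ 0 := by intro h; rw [h] at hp1; exact absurd hp1 (by norm_num)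
  have key2 : ∫⁻ x, (‖g x‖₊ : ℝ≥0∞) ^ (2:ℝ) ∂μ ≤ ENNReal.ofReal a := by
    have hpt : ∀ x, (‖g x‖₊ : ℝ≥0∞) ^ (2:ℝ) = ENNReal.ofReal (g x ^ 2) := by
      intro x
      rw [← enorm_eq_nnnorm, Real.enorm_eq_ofReal_abs, ENNReal.ofReal_rpow_of_nonneg (abs_nonneg _) (by norm_num)]
      congr 1
      rw [show |g x| ^ (2:ℝ) = |g x| ^ (2:ℕ) by rw [← Real.rpow_natCast (|g x|) 2]; norm_num,
        sq_abs]
    calc ∫⁻ x, (‖g x‖₊ : ℝ≥0∞) ^ (2:ℝ) ∂μ = ∫⁻ x, ENNReal.ofReal (g x ^ 2) ∂μ := by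
          simp_rw [hpt]
      _ = ENNReal.ofReal (∫ x, g x ^ 2 ∂μ) :=
          (MeasureTheory.ofReal_integral_eq_lintegral_ofReal hint
            (Filter.Eventually.of_forall fun x => sq_nonneg _)).symm
      _ ≤ ENNReal.ofReal a := ENNReal.ofReal_le_ofReal hia
  rcases le_total p 2 with hp2 | hp2
  · have htr : p.toReal ≤ 2 := by
      have := ENNReal.toReal_mono (by norm_num) hp2
      simpa using this
    rw [max_eq_left htr]
    calc eLpNorm g p μ ≤ eLpNorm g 2 μ := eLpNorm_le_eLpNorm_of_exponent_le hp2 hmeas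
      _ = (∫⁻ x, (‖g x‖₊ : ℝ≥0∞) ^ (2:ℝ) ∂μ) ^ (1/(2:ℝ)) := by
          rw [eLpNorm_eq_lintegral_rpow_enorm_toReal (by norm_num) (by norm_num)]
          norm_num
          rfl
      _ ≤ (ENNReal.ofReal a) ^ (1/(2:ℝ)) := ENNReal.rpow_le_rpow key2 (by norm_num)
  · have htr : 2 ≤ p.toReal := by
      have := ENNReal.toReal_mono hp hp2
      simpa using this
    rw [max_eq_right htr]
    have hbd1 : ∀ x, (‖g x‖₊ : ℝ≥0∞) ≤ 1 := by
      intro x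
      rw [← enorm_eq_nnnorm, Real.enorm_eq_ofReal_abs]
      calc ENNReal.ofReal |g x| ≤ ENNReal.ofReal 1 := ENNReal.ofReal_le_ofReal (hbd x)
        _ = 1 := ENNReal.ofReal_one
    calc eLpNorm g p μ = (∫⁻ x, (‖g x‖₊ : ℝ≥0∞) ^ p.toReal ∂μ) ^ (1/p.toReal) :=
          eLpNorm_eq_lintegral_rpow_enorm_toReal hp0 hp
      _ ≤ (∫⁻ x, (‖g x‖₊ : ℝ≥0∞) ^ (2:ℝ) ∂μ) ^ (1/p.toReal) := by
          refine ENNReal.rpow_le_rpow (lintegral_mono fun x => ?_) (by positivity)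
          exact ENNReal.rpow_le_rpow_of_exponent_ge (hbd1 x) htr
      _ ≤ (ENNReal.ofReal a) ^ (1/p.toReal) := ENNReal.rpow_le_rpow key2 (by positivity)

/-- the ±1 valued function associated with a half `R` of `Bs` -/
def rfun (Bs R : Set Ω) : Ω → ℝ := fun x =>
  R.indicator (1 : Ω → ℝ) x - (Bs \ R).indicator (1 : Ω → ℝ) x

lemma rfun_abs_le (Bs R : Set Ω) (x : Ω) : |rfun Bs R x| ≤ 1 := by
  unfold rfun
  by_cases h1 : x ∈ R
  · have h2 : x ∉ Bs \ R := fun h => h.2 h1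
    simp [Set.indicator_of_mem h1, Set.indicator_of_notMem h2]
  · by_cases h2 : x ∈ Bs \ R
    · simp [Set.indicator_of_notMem h1, Set.indicator_of_mem h2]
    · simp [Set.indicator_of_notMem h1, Set.indicator_of_notMem h2]

lemma integrable_ind (U : Set Ω) (hU : MeasurableSet U) :
    Integrable (U.indicator (1 : Ω → ℝ)) μ := by
  rw [integrable_indicator_iff hU]
  exact integrableOn_const (measure_ne_top μ U)

lemma rfun_mul_eq (Bs R1 R2 : Set Ω) : (fun x => rfun Bs R1 x * rfun Bs R2 x) =
    fun x => (R1 ∩ R2).indicator (1 : Ω → ℝ) x + ((Bs \ R1) ∩ (Bs \ R2)).indicator (1 : Ω → ℝ) x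
      - (R1 ∩ (Bs \ R2)).indicator (1 : Ω → ℝ) x - ((Bs \ R1) ∩ R2).indicator (1 : Ω → ℝ) x := by
  funext x
  simp only [rfun, Set.inter_indicator_one, Pi.mul_apply]
  ring

lemma integral_rfun_mul (Bs R1 R2 : Set Ω) (hB : MeasurableSet Bs)
    (h1 : MeasurableSet R1) (h2 : MeasurableSet R2) :
    ∫ x, rfun Bs R1 x * rfun Bs R2 x ∂μ =
      (μ (R1 ∩ R2)).toReal + (μ ((Bs \ R1) ∩ (Bs \ R2))).toReal
        - (μ (R1 ∩ (Bs \ R2))).toReal - (μ ((Bs \ R1) ∩ R2)).toReal := by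
  rw [rfun_mul_eq]
  have i1 := integrable_ind (μ := μ) _ (h1.inter h2)
  have i2 := integrable_ind (μ := μ) _ ((hB.diff h1).inter (hB.diff h2))
  have i3 := integrable_ind (μ := μ) _ (h1.inter (hB.diff h2))
  have i4 := integrable_ind (μ := μ) _ ((hB.diff h1).inter h2)
  have i12 : Integrable (fun x => (R1 ∩ R2).indicator (1 : Ω → ℝ) x
      + ((Bs \ R1) ∩ (Bs \ R2)).indicator (1 : Ω → ℝ) x) μ := i1.add i2
  have i123 : Integrable (fun x => (R1 ∩ R2).indicator (1 : Ω → ℝ) x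
      + ((Bs \ R1) ∩ (Bs \ R2)).indicator (1 : Ω → ℝ) x
      - (R1 ∩ (Bs \ R2)).indicator (1 : Ω → ℝ) x) μ := i12.sub i3
  rw [integral_sub i123 i4, integral_sub i12 i3, integral_add i1 i2,
    integral_indicator_one (h1.inter h2),
    integral_indicator_one ((hB.diff h1).inter (hB.diff h2)),
    integral_indicator_one (h1.inter (hB.diff h2)),
    integral_indicator_one ((hB.diff h1).inter h2)]
  rfl

lemma integrable_rfun_mul (Bs R1 R2 : Set Ω) (hB : MeasurableSet Bs)
    (h1 : MeasurableSet R1) (h2 : MeasurableSet R2) :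
    Integrable (fun x => rfun Bs R1 x * rfun Bs R2 x) μ := by
  rw [rfun_mul_eq]
  have i1 := integrable_ind (μ := μ) _ (h1.inter h2)
  have i2 := integrable_ind (μ := μ) _ ((hB.diff h1).inter (hB.diff h2))
  have i3 := integrable_ind (μ := μ) _ (h1.inter (hB.diff h2))
  have i4 := integrable_ind (μ := μ) _ ((hB.diff h1).inter h2)
  exact ((i1.add i2).sub i3).sub i4

lemma aesm_rfun (Bs R : Set Ω) (hB : MeasurableSet Bs) (hR : MeasurableSet R) :
    AEStronglyMeasurable (rfun Bs R) μ := by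
  refine (Measurable.aestronglyMeasurable ?_)
  exact (measurable_const.indicator hR).sub (measurable_const.indicator (hB.diff hR))


end Lemmas2

section Orth
variable {μ : Measure Ω} [IsProbabilityMeasure μ] {A : Set Ω} {S : Set (Set Ω)}
  {h : Set Ω → Set Ω} {B : Set Ω}
  (hS : IsSubSigmaAlgebraOn A S)
  (hh : ∀ C ∈ S, h C ∈ S ∧ h C ⊆ C ∧ μ (h C) = μ C / 2)
  (hB : B ∈ S)

local notation "Rs" => Rset h B

include hS hh hB

lemma Rset_meas (n : ℕ) : MeasurableSet (Rs n) := hS.measurable _ (Rset_mem hS hh hB n)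

lemma measB : MeasurableSet B := hS.measurable _ hB

lemma Rset_inter_symm {i j : ℕ} (hij : i ≠ j) : μ (Rs i ∩ Rs j) = μ B * 2⁻¹ * 2⁻¹ := by
  rcases hij.lt_or_gt with hlt | hlt
  · exact Rset_inter hS hh hB hlt
  · rw [Set.inter_comm]; exact Rset_inter hS hh hB hlt

lemma Rset_diff_measure {i j : ℕ} (hij : i ≠ j) : μ (Rs i ∩ (B \ Rs j)) = μ B * 2⁻¹ * 2⁻¹ := by
  have hsub : Rs i ⊆ B := Rset_subset hS hh hB i
  have hset : Rs i ∩ (B \ Rs j) = Rs i \ (Rs i ∩ Rs j) := by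
    rw [Set.diff_self_inter]
    ext x
    exact ⟨fun hx => ⟨hx.1, hx.2.2⟩, fun hx => ⟨hx.1, hsub hx.1, hx.2⟩⟩
  rw [hset, measure_diff Set.inter_subset_left
      ((Rset_meas hS hh hB i).inter (Rset_meas hS hh hB j)).nullMeasurableSet
      (measure_ne_top μ _),
    Rset_inter_symm hS hh hB hij, Rset_measure hS hh hB i,
    sub_self_half (μ B * 2⁻¹) (ENNReal.mul_ne_top (measure_ne_top μ B) (by norm_num))]

lemma Rset_compl_measure (i : ℕ) : μ (B \ Rs i) = μ B * 2⁻¹ := by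
  rw [measure_diff (Rset_subset hS hh hB i) (Rset_meas hS hh hB i).nullMeasurableSet
    (measure_ne_top μ _), Rset_measure hS hh hB i, sub_self_half (μ B) (measure_ne_top μ B)]

lemma Rset_compl_inter {i j : ℕ} (hij : i ≠ j) :
    μ ((B \ Rs i) ∩ (B \ Rs j)) = μ B * 2⁻¹ * 2⁻¹ := by
  have hset : (B \ Rs i) ∩ (B \ Rs j) = (B \ Rs i) \ ((B \ Rs i) ∩ Rs j) := by
    rw [Set.diff_self_inter]
    ext x
    exact ⟨fun hx => ⟨hx.1, hx.2.2⟩, fun hx => ⟨hx.1, hx.1.1, hx.2⟩⟩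
  have hBRj : (B \ Rs i) ∩ Rs j = Rs j ∩ (B \ Rs i) := Set.inter_comm _ _
  rw [hset, measure_diff Set.inter_subset_left
      (((measB hS hh hB).diff (Rset_meas hS hh hB i)).inter (Rset_meas hS hh hB j)).nullMeasurableSet
      (measure_ne_top μ _),
    hBRj, Rset_diff_measure hS hh hB (Ne.symm hij), Rset_compl_measure hS hh hB i,
    sub_self_half (μ B * 2⁻¹) (ENNReal.mul_ne_top (measure_ne_top μ B) (by norm_num))]

lemma integral_rr (i j : ℕ) : ∫ x, rfun B (Rs i) x * rfun B (Rs j) x ∂μ =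
    if i = j then (μ B).toReal else 0 := by
  rcases eq_or_ne i j with rfl | hij
  · rw [if_pos rfl, integral_rfun_mul B (Rs i) (Rs i) (measB hS hh hB) (Rset_meas hS hh hB i)
      (Rset_meas hS hh hB i)]
    rw [Set.inter_self, Set.inter_self, Set.inter_diff_self, Set.inter_comm,
      Set.inter_diff_self, measure_empty, Rset_measure hS hh hB i,
      Rset_compl_measure hS hh hB i]
    rw [← ENNReal.toReal_add (ENNReal.mul_ne_top (measure_ne_top μ B) (by norm_num))
      (ENNReal.mul_ne_top (measure_ne_top μ B) (by norm_num)), inv2_add_inv2]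
    simp
  · rw [if_neg hij, integral_rfun_mul B (Rs i) (Rs j) (measB hS hh hB) (Rset_meas hS hh hB i)
      (Rset_meas hS hh hB j), Rset_inter_symm hS hh hB hij, Rset_diff_measure hS hh hB hij,
      Rset_compl_inter hS hh hB hij]
    have : μ ((B \ Rs i) ∩ Rs j) = μ B * 2⁻¹ * 2⁻¹ := by
      rw [Set.inter_comm]; exact Rset_diff_measure hS hh hB (Ne.symm hij)
    rw [this]
    ring

lemma integral_sum_sq (J : Finset ℕ) :
    ∫ x, (∑ i ∈ J, rfun B (Rs i) x) ^ 2 ∂μ = J.card * (μ B).toReal := by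
  have hexp : (fun x => (∑ i ∈ J, rfun B (Rs i) x) ^ 2)
      = fun x => ∑ i ∈ J, ∑ j ∈ J, rfun B (Rs i) x * rfun B (Rs j) x := by
    funext x
    rw [sq, Finset.sum_mul_sum]
  rw [hexp]
  have hint : ∀ i ∈ J, Integrable (fun x => ∑ j ∈ J, rfun B (Rs i) x * rfun B (Rs j) x) μ :=
    fun i _ => integrable_finset_sum J fun j _ => integrable_rfun_mul B (Rs i) (Rs j)
      (measB hS hh hB) (Rset_meas hS hh hB i) (Rset_meas hS hh hB j)
  rw [integral_finset_sum J hint]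
  have : ∀ i ∈ J, ∫ x, ∑ j ∈ J, rfun B (Rs i) x * rfun B (Rs j) x ∂μ = (μ B).toReal := by
    intro i hi
    rw [integral_finset_sum J fun j _ => integrable_rfun_mul B (Rs i) (Rs j)
      (measB hS hh hB) (Rset_meas hS hh hB i) (Rset_meas hS hh hB j)]
    have := fun j => integral_rr hS hh hB i j
    rw [Finset.sum_congr rfl fun j _ => integral_rr hS hh hB i j, Finset.sum_ite_eq J i
      fun _ => (μ B).toReal, if_pos hi]
  rw [Finset.sum_congr rfl this, Finset.sum_const, nsmul_eq_mul]

end Orth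



section AvgNorm
variable {μ : Measure Ω} [IsProbabilityMeasure μ]

/-- the Lp sign element built from two measurable sets -/
def signLp (μ : Measure Ω) [IsFiniteMeasure μ] (p : ℝ≥0∞) [Fact (1 ≤ p)]
    {R1 R2 : Set Ω} (h1 : MeasurableSet R1) (h2 : MeasurableSet R2) : Lp ℝ p μ :=
  indicatorConstLp p h1 (measure_ne_top μ R1) (1 : ℝ) -
    indicatorConstLp p h2 (measure_ne_top μ R2) (1 : ℝ)

lemma signLp_coeFn (p : ℝ≥0∞) [Fact (1 ≤ p)] {R1 R2 : Set Ω}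
    (h1 : MeasurableSet R1) (h2 : MeasurableSet R2) :
    ⇑(signLp μ p h1 h2) =ᵐ[μ]
      fun x => R1.indicator (1 : Ω → ℝ) x - R2.indicator (1 : Ω → ℝ) x := by
  filter_upwards [Lp.coeFn_sub (indicatorConstLp p h1 (measure_ne_top μ R1) (1 : ℝ))
      (indicatorConstLp p h2 (measure_ne_top μ R2) (1 : ℝ)),
    indicatorConstLp_coeFn (p := p) (hs := h1) (hμs := measure_ne_top μ R1) (c := (1:ℝ)),
    indicatorConstLp_coeFn (p := p) (hs := h2) (hμs := measure_ne_top μ R2) (c := (1:ℝ))]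
    with x hx h1x h2x
  show (⇑(indicatorConstLp p h1 (measure_ne_top μ R1) (1 : ℝ) -
      indicatorConstLp p h2 (measure_ne_top μ R2) (1 : ℝ))) x = _
  rw [hx, Pi.sub_apply, h1x, h2x]
  rfl

lemma norm_signLp_le (p : ℝ≥0∞) [Fact (1 ≤ p)] (hp : p ≠ ∞) {R1 R2 : Set Ω}
    (h1 : MeasurableSet R1) (h2 : MeasurableSet R2) :
    ‖signLp μ p h1 h2‖ ≤ 2 := by
  have hp0 : p ≠ 0 := by
    have hp1 : 1 ≤ p := Fact.out
    intro h; rw [h] at hp1; exact absurd hp1 (by norm_num)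
  have key : ∀ (R : Set Ω) (hR : MeasurableSet R),
      ‖indicatorConstLp p hR (measure_ne_top μ R) (1 : ℝ)‖ ≤ 1 := by
    intro R hR
    rw [norm_indicatorConstLp hp0 hp]
    have h1 : (μ R).toReal ≤ 1 := by
      have := ENNReal.toReal_mono ENNReal.one_ne_top (prob_le_one (μ := μ) (s := R))
      simpa using this
    have h2 : (μ R).toReal ^ (1 / p.toReal) ≤ 1 :=
      Real.rpow_le_one ENNReal.toReal_nonneg h1 (by positivity)
    simpa [Measure.real] using h2
  calc ‖signLp μ p h1 h2‖ ≤ ‖indicatorConstLp p h1 (measure_ne_top μ R1) (1 : ℝ)‖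
        + ‖indicatorConstLp p h2 (measure_ne_top μ R2) (1 : ℝ)‖ := norm_sub_le _ _
    _ ≤ 1 + 1 := add_le_add (key R1 h1) (key R2 h2)
    _ = 2 := by norm_num

variable {A : Set Ω} {S : Set (Set Ω)} {h : Set Ω → Set Ω} {B : Set Ω}
  (hS : IsSubSigmaAlgebraOn A S)
  (hh : ∀ C ∈ S, h C ∈ S ∧ h C ⊆ C ∧ μ (h C) = μ C / 2)
  (hB : B ∈ S)

local notation "Rs" => Rset h B

include hS hh hB

lemma integrable_sum_sq (J : Finset ℕ) :
    Integrable (fun x => (∑ i ∈ J, rfun B (Rs i) x) ^ 2) μ := by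
  have hexp : (fun x => (∑ i ∈ J, rfun B (Rs i) x) ^ 2)
      = fun x => ∑ i ∈ J, ∑ j ∈ J, rfun B (Rs i) x * rfun B (Rs j) x := by
    funext x
    rw [sq, Finset.sum_mul_sum]
  rw [hexp]
  exact integrable_finset_sum J fun i _ => integrable_finset_sum J fun j _ =>
    integrable_rfun_mul B (Rs i) (Rs j) (measB hS hh hB) (Rset_meas hS hh hB i)
      (Rset_meas hS hh hB j)

lemma sgn_coeFn (p : ℝ≥0∞) [Fact (1 ≤ p)] (n : ℕ) :
    ⇑(signLp μ p (Rset_meas hS hh hB n) ((measB hS hh hB).diff (Rset_meas hS hh hB n)))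
      =ᵐ[μ] rfun B (Rs n) :=
  signLp_coeFn p _ _

lemma avg_norm_le (p : ℝ≥0∞) [Fact (1 ≤ p)] (hp : p ≠ ∞) (J : Finset ℕ) (hJ : J.Nonempty) :
    ‖((J.card : ℝ))⁻¹ • ∑ n ∈ J,
        signLp μ p (Rset_meas hS hh hB n) ((measB hS hh hB).diff (Rset_meas hS hh hB n))‖ ≤
      ((J.card : ℝ)⁻¹) ^ (1 / max 2 p.toReal) := by
  classical
  set K : ℕ := J.card with hK
  have hK1 : 1 ≤ K := Finset.card_pos.mpr hJ
  have hKpos : (0:ℝ) < K := by exact_mod_cast hK1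
  set g : Ω → ℝ := fun x => (K : ℝ)⁻¹ * ∑ n ∈ J, rfun B (Rs n) x with hg
  have hae : ⇑((K : ℝ)⁻¹ • ∑ n ∈ J,
      signLp μ p (Rset_meas hS hh hB n) ((measB hS hh hB).diff (Rset_meas hS hh hB n)))
        =ᵐ[μ] g := by
    have h1 := Lp.coeFn_smul ((K : ℝ)⁻¹) (∑ n ∈ J,
      signLp μ p (Rset_meas hS hh hB n) ((measB hS hh hB).diff (Rset_meas hS hh hB n)))
    have h2 := coeFn_finset_sum p (fun n =>
      signLp μ p (Rset_meas hS hh hB n) ((measB hS hh hB).diff (Rset_meas hS hh hB n))) J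
    have h3 : ∀ᵐ x ∂μ, ∀ n ∈ J,
        (signLp μ p (Rset_meas hS hh hB n) ((measB hS hh hB).diff (Rset_meas hS hh hB n))) x
          = rfun B (Rs n) x := by
      rw [Filter.eventually_all_finset]
      intro n _
      exact sgn_coeFn hS hh hB p n
    filter_upwards [h1, h2, h3] with x hx1 hx2 hx3
    rw [hx1, Pi.smul_apply, hx2, smul_eq_mul, hg]
    congr 1
    exact Finset.sum_congr rfl hx3
  rw [Lp.norm_def, eLpNorm_congr_ae hae]
  have hmeasg : AEStronglyMeasurable g μ := by
    refine ((Finset.aestronglyMeasurable_fun_sum J fun n _ =>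
      aesm_rfun (μ := μ) B (Rs n) (measB hS hh hB) (Rset_meas hS hh hB n)).const_mul _)
  have hbd : ∀ x, |g x| ≤ 1 := by
    intro x
    rw [hg, abs_mul, abs_inv, Nat.abs_cast]
    have habs : |∑ n ∈ J, rfun B (Rs n) x| ≤ (K : ℝ) := by
      calc |∑ n ∈ J, rfun B (Rs n) x| ≤ ∑ n ∈ J, |rfun B (Rs n) x| :=
            Finset.abs_sum_le_sum_abs _ _
        _ ≤ ∑ _n ∈ J, 1 := Finset.sum_le_sum fun n _ => rfun_abs_le B (Rs n) x
        _ = (K : ℝ) := by rw [Finset.sum_const, nsmul_eq_mul, mul_one, hK]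
    calc (K:ℝ)⁻¹ * |∑ n ∈ J, rfun B (Rs n) x| ≤ (K:ℝ)⁻¹ * K :=
          mul_le_mul_of_nonneg_left habs (by positivity)
      _ = 1 := inv_mul_cancel₀ hKpos.ne'
  have hint : Integrable (fun x => g x ^ 2) μ := by
    have : (fun x => g x ^ 2) = fun x => ((K:ℝ)⁻¹)^2 * (∑ n ∈ J, rfun B (Rs n) x) ^ 2 := by
      funext x; rw [hg]; ring
    rw [this]
    exact (integrable_sum_sq hS hh hB J).const_mul _
  have hia : ∫ x, g x ^ 2 ∂μ ≤ (K : ℝ)⁻¹ := by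
    have hrw : (fun x => g x ^ 2) = fun x => ((K:ℝ)⁻¹)^2 * (∑ n ∈ J, rfun B (Rs n) x) ^ 2 := by
      funext x; rw [hg]; ring
    rw [hrw, integral_const_mul, integral_sum_sq hS hh hB J, ← hK]
    have hble : (μ B).toReal ≤ 1 := by
      have := ENNReal.toReal_mono ENNReal.one_ne_top (prob_le_one (μ := μ) (s := B))
      simpa using this
    calc ((K:ℝ)⁻¹)^2 * (K * (μ B).toReal) ≤ ((K:ℝ)⁻¹)^2 * (K * 1) := by
          refine mul_le_mul_of_nonneg_left ?_ (by positivity)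
          exact mul_le_mul_of_nonneg_left hble (by positivity)
      _ = (K:ℝ)⁻¹ * ((K:ℝ)⁻¹ * K) := by ring
      _ = (K:ℝ)⁻¹ := by rw [inv_mul_cancel₀ hKpos.ne', mul_one]
  have hbound := eLpNorm_le_of_sq hmeasg hbd hint (by positivity : (0:ℝ) ≤ (K:ℝ)⁻¹) hia p hp
  have hne : (ENNReal.ofReal ((K:ℝ)⁻¹)) ^ (1 / max 2 p.toReal) ≠ ⊤ :=
    ENNReal.rpow_ne_top_of_nonneg (by positivity) ENNReal.ofReal_ne_top
  calc (eLpNorm g p μ).toReal ≤ ((ENNReal.ofReal ((K:ℝ)⁻¹)) ^ (1 / max 2 p.toReal)).toReal :=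
        ENNReal.toReal_mono hne hbound
    _ = ((K : ℝ)⁻¹) ^ (1 / max 2 p.toReal) := by
        rw [← ENNReal.toReal_rpow, ENNReal.toReal_ofReal (by positivity)]

end AvgNorm


/-- Over a nonatomic probability space `(Ω, Σ, μ)` and `1 ≤ p < ∞`,
every compact bounded linear operator `T : L_p(μ) → X` into a Banach space is
hereditarily PP-narrow. -/
theorem compactOp_hppNarrow
    (μ : Measure Ω) [IsProbabilityMeasure μ] [NullSingletonClass μ]
    (p : ℝ≥0∞) [Fact (1 ≤ p)] (hp : p ≠ ∞)
    {X : Type*} [NormedAddCommGroup X] [NormedSpace ℝ X] [CompleteSpace X]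
    (T : Lp ℝ p μ →L[ℝ] X) (hT : CompactOp T) :
    HPPNarrow μ p T := by
  classical
  intro A hA hμA S hS hNA B hB hμB ε hε
  -- halving choice function
  have H : ∀ C : Set Ω, ∃ D : Set Ω, C ∈ S → (D ∈ S ∧ D ⊆ C ∧ μ D = μ C / 2) := by
    intro C
    by_cases hC : C ∈ S
    · obtain ⟨D, hD, hDC, hDm, _⟩ := SSA.halve hS hNA hC
      exact ⟨D, fun _ => ⟨hD, hDC, hDm⟩⟩
    · exact ⟨∅, fun hc => absurd hc hC⟩
  choose h hh using H
  have hh' : ∀ C ∈ S, h C ∈ S ∧ h C ⊆ C ∧ μ (h C) = μ C / 2 := fun C hC => hh C hC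
  -- the sequence of signs
  set sgn : ℕ → Lp ℝ p μ := fun n =>
    signLp μ p (Rset_meas hS hh' hB n) ((measB hS hh' hB).diff (Rset_meas hS hh' hB n))
    with hsgn
  have hsign : ∀ n, IsSignIn μ p (sgn n) B S := by
    intro n
    refine ⟨Rset h B n, Rset_mem hS hh' hB n, B \ Rset h B n,
      SSA.sdiff_mem hS hB (Rset_mem hS hh' hB n),
      Rset_meas hS hh' hB n, (measB hS hh' hB).diff (Rset_meas hS hh' hB n),
      Set.disjoint_sdiff_right, Set.union_diff_cancel (Rset_subset hS hh' hB n), ?_, rfl⟩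
    rw [Rset_measure hS hh' hB n, Rset_compl_measure hS hh' hB n]
  -- compactness: extract a convergent subsequence of (T (sgn n))
  have hmem : ∀ n, T (sgn n) ∈ closure (T '' Metric.closedBall 0 2) := by
    intro n
    refine subset_closure (Set.mem_image_of_mem T ?_)
    rw [Metric.mem_closedBall, dist_zero_right]
    exact norm_signLp_le p hp _ _
  obtain ⟨y, -, φ, hφ, hconv⟩ :=
    (hT (Metric.closedBall 0 2) Metric.isBounded_closedBall).tendsto_subseq hmem
  rw [Metric.tendsto_atTop] at hconv
  have hε4 : 0 < ε / 4 := by positivity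
  obtain ⟨N₀, hN₀⟩ := hconv (ε / 4) hε4
  have hN₀' : ∀ k ≥ N₀, ‖T (sgn (φ k)) - y‖ ≤ ε / 4 := by
    intro k hk
    have := hN₀ k hk
    rw [Function.comp_apply, dist_eq_norm] at this
    exact this.le
  -- choose the number of terms to average
  set e : ℝ := max 2 p.toReal with he
  have hepos : (0:ℝ) < 1 / e := by
    have : (0:ℝ) < e := lt_of_lt_of_le two_pos (le_max_left _ _)
    positivity
  have htend : Tendsto (fun K : ℕ => ‖T‖ * ((K : ℝ)⁻¹) ^ (1 / e)) atTop (𝓝 0) := by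
    have h1 : Tendsto (fun K : ℕ => ((K : ℝ)⁻¹)) atTop (𝓝 0) :=
      tendsto_inv_atTop_nhds_zero_nat
    have h2 : ContinuousAt (fun x : ℝ => x ^ (1 / e)) 0 :=
      Real.continuousAt_rpow_const 0 (1 / e) (Or.inr hepos.le)
    have h3 : Tendsto (fun K : ℕ => ((K : ℝ)⁻¹) ^ (1 / e)) atTop (𝓝 ((0:ℝ) ^ (1 / e))) :=
      (h2.tendsto.comp h1)
    rw [Real.zero_rpow hepos.ne'] at h3
    simpa using h3.const_mul ‖T‖
  obtain ⟨K, hK⟩ := ((htend.eventually (gt_mem_nhds hε4)).and (eventually_ge_atTop 1)).exists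
  obtain ⟨hKε, hK1⟩ := hK
  have hKpos : (0:ℝ) < K := by exact_mod_cast hK1
  -- the index set
  set J : Finset ℕ := (Finset.range K).image (fun i => φ (N₀ + i)) with hJ
  have hinj : Function.Injective (fun i => φ (N₀ + i)) := by
    intro a b hab
    have := hφ.injective hab
    omega
  have hcard : J.card = K := by
    rw [hJ, Finset.card_image_of_injective _ hinj, Finset.card_range]
  have hJne : J.Nonempty := by
    rw [← Finset.card_pos, hcard]; omega
  set g : Lp ℝ p μ := ((J.card : ℝ))⁻¹ • ∑ n ∈ J, sgn n with hg
  have hgnorm : ‖g‖ ≤ ((K:ℝ)⁻¹) ^ (1 / e) := by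
    have h0 := avg_norm_le hS hh' hB p hp J hJne
    rw [hcard] at h0
    simp only [hg, hsgn, he, hcard]
    exact h0
  -- T g is close to y
  have hTg : T g = ((K : ℝ))⁻¹ • ∑ n ∈ J, T (sgn n) := by
    rw [hg, _root_.map_smul, map_sum, hcard]
  have hclose : ∀ n ∈ J, ‖T (sgn n) - y‖ ≤ ε / 4 := by
    intro n hn
    rw [hJ, Finset.mem_image] at hn
    obtain ⟨i, _, rfl⟩ := hn
    exact hN₀' (N₀ + i) (by omega)
  have hTgy : ‖T g - y‖ ≤ ε / 4 := by
    have hsum : T g - y = ((K : ℝ))⁻¹ • ∑ n ∈ J, (T (sgn n) - y) := by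
      rw [Finset.sum_sub_distrib, Finset.sum_const, hcard, smul_sub, ← hTg]
      congr 1
      rw [← Nat.cast_smul_eq_nsmul ℝ K y, smul_smul, inv_mul_cancel₀ hKpos.ne', one_smul]
    rw [hsum, norm_smul, norm_inv, Real.norm_natCast]
    calc (K:ℝ)⁻¹ * ‖∑ n ∈ J, (T (sgn n) - y)‖ ≤ (K:ℝ)⁻¹ * (K * (ε / 4)) := by
          refine mul_le_mul_of_nonneg_left ?_ (by positivity)
          calc ‖∑ n ∈ J, (T (sgn n) - y)‖ ≤ ∑ n ∈ J, ‖T (sgn n) - y‖ :=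
                norm_sum_le _ _
            _ ≤ ∑ _n ∈ J, (ε / 4) := Finset.sum_le_sum hclose
            _ = K * (ε / 4) := by rw [Finset.sum_const, hcard, nsmul_eq_mul]
      _ = (K:ℝ)⁻¹ * K * (ε / 4) := by ring
      _ = ε / 4 := by rw [inv_mul_cancel₀ hKpos.ne', one_mul]
  have hTgsmall : ‖T g‖ ≤ ε / 4 := by
    calc ‖T g‖ ≤ ‖T‖ * ‖g‖ := T.le_opNorm g
      _ ≤ ‖T‖ * (((K:ℝ)⁻¹) ^ (1 / e)) := by
          refine mul_le_mul_of_nonneg_left hgnorm (norm_nonneg T)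
      _ ≤ ε / 4 := hKε.le
  have hy : ‖y‖ ≤ ε / 2 := by
    calc ‖y‖ = ‖y - T g + T g‖ := by rw [sub_add_cancel]
      _ ≤ ‖y - T g‖ + ‖T g‖ := norm_add_le _ _
      _ = ‖T g - y‖ + ‖T g‖ := by rw [norm_sub_rev]
      _ ≤ ε / 4 + ε / 4 := add_le_add hTgy hTgsmall
      _ = ε / 2 := by ring
  refine ⟨sgn (φ N₀), hsign (φ N₀), ?_⟩
  calc ‖T (sgn (φ N₀))‖ = ‖T (sgn (φ N₀)) - y + y‖ := by rw [sub_add_cancel]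
    _ ≤ ‖T (sgn (φ N₀)) - y‖ + ‖y‖ := norm_add_le _ _
    _ ≤ ε / 4 + ε / 2 := add_le_add (hN₀' N₀ le_rfl) hy
    _ ≤ ε := by linarith
end
end

section
/- Let 1 ≤ p < ∞ and let T: L_p → X be a PP-narrow operator into a Banach space X. Then for every A ∈ Σ⁺ and every family (ε_α)_{α ∈ 𝒜_∞} of positive numbers there is a Haar-like system {h_α : α ∈ 𝒜_∞} on A such that ‖Th_α‖ ≤ ε_α for every α ∈ 𝒜_∞. -/
open MeasureTheory ENNReal Set Filter

noncomputable section

variable {Ω : Type*} [MeasurableSpace Ω]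

/-- A *tree of subsets* on `A`, indexed by finite ±1-tuples (modelled as `List Bool`,
`true ↔ 1`, `false ↔ -1`): `t [] = A` and for every `α` the sets `t (α ++ [true])` and
`t (α ++ [false])` form a partition of `t α` into two measurable subsets of equal measure. -/
structure IsTreeOn (μ : Measure Ω) (A : Set Ω) (t : List Bool → Set Ω) : Prop where
  root : t [] = A
  meas : ∀ α, MeasurableSet (t α)
  disj : ∀ α, Disjoint (t (α ++ [true])) (t (α ++ [false]))
  union : ∀ α, t (α ++ [true]) ∪ t (α ++ [false]) = t α
  eqmeas : ∀ α, μ (t (α ++ [true])) = μ (t (α ++ [false]))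

/-- The *Haar-like system* corresponding to a tree of subsets:
`h_α = χ_{A_{α,1}} - χ_{A_{α,-1}}`, as an element of `L_p(μ)`. -/
def haarFn (μ : Measure Ω) [IsFiniteMeasure μ] (p : ℝ≥0∞) [Fact (1 ≤ p)]
    (t : List Bool → Set Ω) (ht : ∀ α, MeasurableSet (t α)) (α : List Bool) : Lp ℝ p μ :=
  indicatorConstLp p (ht (α ++ [true])) (measure_ne_top μ _) (1 : ℝ) -
  indicatorConstLp p (ht (α ++ [false])) (measure_ne_top μ _) (1 : ℝ)

/-- Auxiliary: the indicator of a null set is zero in `Lp`. -/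
lemma indicatorConstLp_eq_zero_of_null {μ : Measure Ω} {p : ℝ≥0∞} [Fact (1 ≤ p)]
    (hp : p ≠ ∞) {s : Set Ω} (hs : MeasurableSet s) (hμs : μ s ≠ ∞) (h0 : μ s = 0) (c : ℝ) :
    indicatorConstLp p hs hμs c = 0 := by
  have hp1 : (1 : ℝ≥0∞) ≤ p := Fact.out
  have hp0 : p ≠ 0 := by intro h; simp [h] at hp1
  have hpr : p.toReal ≠ 0 := ENNReal.toReal_ne_zero.2 ⟨hp0, hp⟩
  rw [← norm_le_zero_iff]
  calc ‖indicatorConstLp p hs hμs c‖ ≤ ‖c‖ * (μ s).toReal ^ (1 / p.toReal) :=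
        norm_indicatorConstLp_le
    _ = 0 := by
        rw [h0, ENNReal.toReal_zero,
          Real.zero_rpow (by rw [one_div]; exact inv_ne_zero hpr), mul_zero]

/-- Auxiliary: `indicatorConstLp` only depends on the underlying set. -/
lemma indicatorConstLp_congr_set {μ : Measure Ω} {p : ℝ≥0∞} [Fact (1 ≤ p)] [IsFiniteMeasure μ]
    {s₁ s₂ : Set Ω} (h : s₁ = s₂) (h₁ : MeasurableSet s₁) (h₂ : MeasurableSet s₂) (c : ℝ) :
    indicatorConstLp p h₁ (measure_ne_top μ s₁) c =
    indicatorConstLp p h₂ (measure_ne_top μ s₂) c := by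
  subst h; rfl

/-- Auxiliary: splitting any measurable set into two halves of equal measure on which the
operator applied to the corresponding sign is small. -/
lemma exists_good_split (μ : Measure Ω) [IsProbabilityMeasure μ]
    (p : ℝ≥0∞) [Fact (1 ≤ p)] (hp : p ≠ ∞)
    {X : Type*} [NormedAddCommGroup X] [NormedSpace ℝ X]
    (T : Lp ℝ p μ →L[ℝ] X) (hT : PPNarrow μ p T)
    (S : Set Ω) (hS : MeasurableSet S) (e : ℝ) (he : 0 < e) :
    ∃ B : Bool → Set Ω, (∀ b, MeasurableSet (B b)) ∧
      Disjoint (B true) (B false) ∧ B true ∪ B false = S ∧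
      μ (B true) = μ (B false) ∧
      ∀ (h₁ : MeasurableSet (B true)) (h₂ : MeasurableSet (B false)),
        ‖T (indicatorConstLp p h₁ (measure_ne_top μ _) (1 : ℝ) -
            indicatorConstLp p h₂ (measure_ne_top μ _) (1 : ℝ))‖ ≤ e := by
  rcases eq_or_lt_of_le (zero_le : 0 ≤ μ S) with h0 | hpos
  · refine ⟨fun b => if b then S else ∅, by rintro (_|_) <;> simpa using hS, by simp, by simp,
      by simp [← h0], ?_⟩
    intro h₁ h₂
    rw [indicatorConstLp_eq_zero_of_null hp h₁ _ (by simpa using h0.symm),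
        indicatorConstLp_eq_zero_of_null hp h₂ _ (by simp)]
    simpa using he.le
  · obtain ⟨f, ⟨B₁, B₂, h₁, h₂, hd, hu, heq, hf⟩, hTf⟩ := hT S hS hpos e he
    refine ⟨fun b => if b then B₁ else B₂, by rintro (_|_) <;> simpa [*], by simpa using hd,
      by simpa using hu, by simpa using heq, ?_⟩
    intro h₁' h₂'
    convert hTf using 3
    rw [hf]

/-- Auxiliary: recursive construction of a tree of (measurable) sets from a splitting rule. -/
def buildTree (G : {S : Set Ω // MeasurableSet S} → List Bool → Bool → {S : Set Ω // MeasurableSet S})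
    (A : {S : Set Ω // MeasurableSet S}) : List Bool → {S : Set Ω // MeasurableSet S}
  | [] => A
  | b :: ρ => G (buildTree G A ρ) ρ.reverse b

/-- Lemma 2.4(a). If `T : L_p(μ) → X` is PP-narrow, then for every
`A` of nonzero measure and every family `(ε_α)_{α ∈ 𝒜_∞}` of positive numbers there is
a Haar-like system `(h_α)` on `A` with `‖T h_α‖ ≤ ε_α` for all `α`. -/
theorem ppNarrow_exists_haarLike_small
    (μ : Measure Ω) [IsProbabilityMeasure μ] [NullSingletonClass μ]
    (p : ℝ≥0∞) [Fact (1 ≤ p)] (hp : p ≠ ∞)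
    {X : Type*} [NormedAddCommGroup X] [NormedSpace ℝ X] [CompleteSpace X]
    (T : Lp ℝ p μ →L[ℝ] X) (hT : PPNarrow μ p T)
    (A : Set Ω) (hA : MeasurableSet A) (hA0 : 0 < μ A)
    (ε : List Bool → ℝ) (hε : ∀ α, 0 < ε α) :
    ∃ t : List Bool → Set Ω, ∃ ht : IsTreeOn μ A t,
      ∀ α : List Bool, ‖T (haarFn μ p t ht.meas α)‖ ≤ ε α := by
  classical
  choose B hmeas hdisj hunion heqm hnorm using exists_good_split μ p hp T hT
  set G : {S : Set Ω // MeasurableSet S} → List Bool → Bool → {S : Set Ω // MeasurableSet S} :=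
    fun S α b => ⟨B S.1 S.2 (ε α) (hε α) b, hmeas S.1 S.2 (ε α) (hε α) b⟩ with hG
  set s : List Bool → {S : Set Ω // MeasurableSet S} := buildTree G ⟨A, hA⟩ with hs
  set t : List Bool → Set Ω := fun α => (s α.reverse).1 with htdef
  have key : ∀ α b, t (α ++ [b]) = B (t α) (s α.reverse).2 (ε α) (hε α) b := by
    intro α b
    show (s (α ++ [b]).reverse).1 = _
    rw [show (α ++ [b]).reverse = b :: α.reverse by simp]
    show (G (buildTree G ⟨A, hA⟩ α.reverse) α.reverse.reverse b).1 = _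
    rw [List.reverse_reverse]
  refine ⟨t, ⟨rfl, fun α => (s α.reverse).2, ?_, ?_, ?_⟩, ?_⟩
  · intro α; rw [key α true, key α false]; exact hdisj _ _ _ _
  · intro α; rw [key α true, key α false]; exact hunion _ _ _ _
  · intro α; rw [key α true, key α false]; exact heqm _ _ _ _
  · intro α
    unfold haarFn
    rw [indicatorConstLp_congr_set (key α true) _
          (hmeas (t α) (s α.reverse).2 (ε α) (hε α) true) 1,
        indicatorConstLp_congr_set (key α false) _
          (hmeas (t α) (s α.reverse).2 (ε α) (hε α) false) 1]
    exact hnorm (t α) (s α.reverse).2 (ε α) (hε α) _ _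
end
end

section
/- Let 1 ≤ p < ∞, X a Banach space, and U, V: L_p → X bounded linear operators. If U is PP-narrow and V is hereditarily PP-narrow, then U + V is PP-narrow. -/
open MeasureTheory ENNReal Set Filter
open scoped symmDiff

noncomputable section

variable {Ω : Type*} [MeasurableSpace Ω]

namespace PPAux

variable {Ω : Type*} [MeasurableSpace Ω]

/-- dyadic levels -/
def level : ℕ → Finset (List Bool)
  | 0 => {([] : List Bool)}
  | n+1 => (level n).biUnion (fun s => {false :: s, true :: s})

lemma mem_level : ∀ {n : ℕ} {s : List Bool}, s ∈ level n ↔ s.length = n := by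
  intro n
  induction n with
  | zero => intro s; simp [level, List.length_eq_zero_iff]
  | succ n ih =>
    intro s
    simp only [level, Finset.mem_biUnion, Finset.mem_insert, Finset.mem_singleton]
    constructor
    · rintro ⟨t, ht, rfl | rfl⟩ <;> simp [ih.1 ht]
    · intro hs
      match s with
      | b :: t =>
        refine ⟨t, ih.2 (by simpa using hs), ?_⟩
        cases b <;> simp

lemma pairwise_level_cons (n : ℕ) :
    (↑(level n) : Set (List Bool)).PairwiseDisjoint
      (fun s => ({false :: s, true :: s} : Finset (List Bool))) := by
  intro s _ t _ hst
  simp only [Function.onFun, Finset.disjoint_left, Finset.mem_insert, Finset.mem_singleton]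
  rintro a (rfl | rfl) <;> rintro (h | h) <;> simp_all

lemma level_sum {M : Type*} [AddCommMonoid M] (n : ℕ) (F : List Bool → M) :
    ∑ s ∈ level (n+1), F s = ∑ s ∈ level n, (F (false :: s) + F (true :: s)) := by
  rw [show level (n+1) = (level n).biUnion (fun s => {false :: s, true :: s}) from rfl,
    Finset.sum_biUnion (pairwise_level_cons n)]
  refine Finset.sum_congr rfl fun s _ => ?_
  rw [Finset.sum_pair (by simp)]

lemma level_biUnion (n : ℕ) (T : List Bool → Set Ω) :
    ⋃ s ∈ level (n+1), T s = ⋃ s ∈ level n, (T (false :: s) ∪ T (true :: s)) := by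
  rw [show level (n+1) = (level n).biUnion (fun s => {false :: s, true :: s}) from rfl,
    Finset.set_biUnion_biUnion]
  refine iUnion₂_congr fun s _ => ?_
  simp



section Ind
variable (μ : Measure Ω) [IsFiniteMeasure μ] (p : ℝ≥0∞) [Fact (1 ≤ p)]

lemma ind_congr {s t : Set Ω} (h : s = t) (hs : MeasurableSet s) (ht : MeasurableSet t) :
    indicatorConstLp p hs (measure_ne_top μ s) (1 : ℝ) =
      indicatorConstLp p ht (measure_ne_top μ t) (1 : ℝ) := by
  subst h; rfl

lemma norm_ind_sub_le (hp : p ≠ ∞) {B C : Set Ω} (hB : MeasurableSet B) (hC : MeasurableSet C) :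
    ‖indicatorConstLp p hB (measure_ne_top μ B) (1 : ℝ) -
      indicatorConstLp p hC (measure_ne_top μ C) (1 : ℝ)‖ ≤
      (μ (B ∆ C) ^ (1 / p.toReal)).toReal := by
  have hp0 : p ≠ 0 := (lt_of_lt_of_le zero_lt_one (Fact.out : 1 ≤ p)).ne'
  rw [Lp.norm_def]
  have hae : ⇑(indicatorConstLp p hB (measure_ne_top μ B) (1 : ℝ) -
      indicatorConstLp p hC (measure_ne_top μ C) (1 : ℝ)) =ᵐ[μ]
      fun x => B.indicator (fun _ => (1:ℝ)) x - C.indicator (fun _ => (1:ℝ)) x := by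
    filter_upwards [Lp.coeFn_sub (indicatorConstLp p hB (measure_ne_top μ B) (1 : ℝ))
      (indicatorConstLp p hC (measure_ne_top μ C) (1 : ℝ)),
      indicatorConstLp_coeFn (p := p) (hs := hB) (hμs := measure_ne_top μ B) (c := (1:ℝ)),
      indicatorConstLp_coeFn (p := p) (hs := hC) (hμs := measure_ne_top μ C) (c := (1:ℝ))]
      with x h1 h2 h3
    rw [h1, Pi.sub_apply, h2, h3]
  have hle : eLpNorm (fun x => B.indicator (fun _ => (1:ℝ)) x - C.indicator (fun _ => (1:ℝ)) x)
      p μ ≤ eLpNorm ((B ∆ C).indicator (fun _ => (1:ℝ))) p μ := by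
    refine eLpNorm_mono fun x => ?_
    by_cases hxB : x ∈ B <;> by_cases hxC : x ∈ C <;>
      simp [Set.indicator_apply, hxB, hxC, Set.mem_symmDiff, abs_le]
  calc (eLpNorm (⇑(indicatorConstLp p hB (measure_ne_top μ B) (1 : ℝ) -
        indicatorConstLp p hC (measure_ne_top μ C) (1 : ℝ))) p μ).toReal
      = (eLpNorm (fun x => B.indicator (fun _ => (1:ℝ)) x - C.indicator (fun _ => (1:ℝ)) x)
          p μ).toReal := by rw [eLpNorm_congr_ae hae]
    _ ≤ ((μ (B ∆ C)) ^ (1 / p.toReal)).toReal := by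
        refine ENNReal.toReal_mono ?_ ?_
        · refine (ENNReal.rpow_ne_top_of_nonneg (by positivity) (measure_ne_top μ _))
        · refine hle.trans ?_
          rw [eLpNorm_indicator_const (hB.symmDiff hC) hp0 hp]
          simp

lemma sum_ind {ι : Type*} [DecidableEq ι] (F : Finset ι) (B : ι → Set Ω)
    (hm : ∀ i, MeasurableSet (B i))
    (hd : ∀ i ∈ F, ∀ j ∈ F, i ≠ j → Disjoint (B i) (B j)) :
    indicatorConstLp p (Finset.measurableSet_biUnion F fun i _ => hm i)
        (measure_ne_top μ _) (1 : ℝ) =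
      ∑ i ∈ F, indicatorConstLp p (hm i) (measure_ne_top μ (B i)) (1 : ℝ) := by
  classical
  induction F using Finset.induction_on with
  | empty =>
    rw [Finset.sum_empty]
    rw [ind_congr μ p (by simp) _ MeasurableSet.empty]
    exact indicatorConstLp_empty
  | @insert a F ha ih =>
    rw [Finset.sum_insert ha, ← ih (fun i hi => fun j hj => hd i (Finset.mem_insert_of_mem hi) j
      (Finset.mem_insert_of_mem hj))]
    rw [ind_congr μ p (Finset.set_biUnion_insert a F B) _
      ((hm a).union (Finset.measurableSet_biUnion F fun i _ => hm i))]
    rw [← indicatorConstLp_disjoint_union]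
    exact Set.disjoint_iUnion₂_right.2 fun i hi =>
      hd a (Finset.mem_insert_self a F) i (Finset.mem_insert_of_mem hi)
        (fun h => ha (h ▸ hi))

lemma toReal_abs_sub_le {B C : Set Ω} :
    |(μ B).toReal - (μ C).toReal| ≤ (μ (B ∆ C)).toReal := by
  have h1 : μ B ≤ μ C + μ (B ∆ C) := by
    refine (measure_mono (show B ⊆ C ∪ B ∆ C by
      intro x hx; by_cases hxC : x ∈ C
      · exact Or.inl hxC
      · exact Or.inr (Set.mem_symmDiff.2 (Or.inl ⟨hx, hxC⟩)))).trans (measure_union_le _ _)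
  have h2 : μ C ≤ μ B + μ (B ∆ C) := by
    refine (measure_mono (show C ⊆ B ∪ B ∆ C by
      intro x hx; by_cases hxB : x ∈ B
      · exact Or.inl hxB
      · exact Or.inr (Set.mem_symmDiff.2 (Or.inr ⟨hx, hxB⟩)))).trans (measure_union_le _ _)
  rw [abs_sub_le_iff]
  constructor
  · have := ENNReal.toReal_mono (by finiteness) h1
    rw [ENNReal.toReal_add (by finiteness) (by finiteness)] at this
    linarith
  · have := ENNReal.toReal_mono (by finiteness) h2
    rw [ENNReal.toReal_add (by finiteness) (by finiteness)] at this
    linarith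


end Ind

lemma card_level (n : ℕ) : (level n).card = 2 ^ n := by
  induction n with
  | zero => simp [level]
  | succ n ih =>
    rw [show level (n+1) = (level n).biUnion (fun s => {false :: s, true :: s}) from rfl,
      Finset.card_biUnion (pairwise_level_cons n)]
    rw [Finset.sum_congr rfl (fun s _ => show ({false :: s, true :: s} : Finset _).card = 2
      from Finset.card_pair (by simp))]
    rw [Finset.sum_const, ih]
    ring

/-- The `Lp` indicator with constant 1. -/
def ind1 (μ : Measure Ω) [IsFiniteMeasure μ] (p : ℝ≥0∞) [Fact (1 ≤ p)]
    {B : Set Ω} (hB : MeasurableSet B) : Lp ℝ p μ :=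
  indicatorConstLp p hB (measure_ne_top μ B) (1 : ℝ)

section Haar

variable (μ : Measure Ω) [IsFiniteMeasure μ] (p : ℝ≥0∞) [Fact (1 ≤ p)]
  {X : Type*} [NormedAddCommGroup X] [NormedSpace ℝ X]

lemma haar_est (U : Lp ℝ p μ →L[ℝ] X)
    (T : List Bool → Set Ω) (hmeas : ∀ s, MeasurableSet (T s))
    (hunion : ∀ s, T (false :: s) ∪ T (true :: s) = T s)
    (hdisj : ∀ s, Disjoint (T (false :: s)) (T (true :: s)))
    (ε₁ : ℝ)
    (hnorm : ∀ s, ‖U (ind1 μ p (hmeas (false :: s)) - ind1 μ p (hmeas (true :: s)))‖ ≤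
      ε₁ / 4 ^ (s.length + 1)) :
    ∀ (n : ℕ) (c : List Bool → ℝ), (∀ s, |c s| ≤ 1) →
      ‖U (∑ s ∈ level n, c s • ind1 μ p (hmeas s)) -
        ((∑ s ∈ level n, c s) / 2 ^ n) • U (ind1 μ p (hmeas []))‖ ≤
        ∑ k ∈ Finset.range n, 2 ^ k * (ε₁ / 4 ^ (k + 1)) := by
  have he : ∀ s, ind1 μ p (hmeas s) =
      ind1 μ p (hmeas (false :: s)) + ind1 μ p (hmeas (true :: s)) := by
    intro s
    rw [ind1, ind1, ind1, ← indicatorConstLp_disjoint_union (hmeas _) (hmeas _)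
      (measure_ne_top μ _) (measure_ne_top μ _) (hdisj s)]
    exact ind_congr μ p (hunion s).symm _ _
  intro n
  induction n with
  | zero =>
    intro c hc
    simp only [level, Finset.sum_singleton, pow_zero, div_one, Finset.range_zero,
      Finset.sum_empty, _root_.map_smul]
    simp
  | succ n ih =>
    intro c hc
    set c' : List Bool → ℝ := fun s => (c (false :: s) + c (true :: s)) / 2 with hc'def
    set d : List Bool → ℝ := fun s => (c (false :: s) - c (true :: s)) / 2 with hddef
    have hc' : ∀ s, |c' s| ≤ 1 := by
      intro s
      have h1 := hc (false :: s); have h2 := hc (true :: s)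
      calc |c' s| = |c (false :: s) + c (true :: s)| / 2 := by
            rw [hc'def]; rw [abs_div]; norm_num
        _ ≤ (|c (false :: s)| + |c (true :: s)|) / 2 := by gcongr; exact abs_add_le _ _
        _ ≤ 1 := by linarith
    have hd : ∀ s, |d s| ≤ 1 := by
      intro s
      have h1 := hc (false :: s); have h2 := hc (true :: s)
      calc |d s| = |c (false :: s) - c (true :: s)| / 2 := by
            rw [hddef]; rw [abs_div]; norm_num
        _ ≤ (|c (false :: s)| + |c (true :: s)|) / 2 := by gcongr; exact abs_sub _ _
        _ ≤ 1 := by linarith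
    have hsum1 : ∑ s ∈ level (n+1), c s • ind1 μ p (hmeas s) =
        ∑ s ∈ level n, (c' s • ind1 μ p (hmeas s) +
          d s • (ind1 μ p (hmeas (false :: s)) - ind1 μ p (hmeas (true :: s)))) := by
      rw [level_sum n (fun s => c s • ind1 μ p (hmeas s))]
      refine Finset.sum_congr rfl fun s _ => ?_
      rw [he s]
      simp only [hc'def, hddef]
      match_scalars <;> ring
    have hsum2 : (∑ s ∈ level (n+1), c s) / 2 ^ (n+1) = (∑ s ∈ level n, c' s) / 2 ^ n := by
      rw [level_sum n c]
      rw [Finset.sum_congr rfl (fun s _ => show c (false :: s) + c (true :: s) = 2 * c' s by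
        simp only [hc'def]; ring)]
      rw [← Finset.mul_sum]
      field_simp
      ring
    have hexpand : U (∑ s ∈ level (n+1), c s • ind1 μ p (hmeas s)) -
        ((∑ s ∈ level (n+1), c s) / 2 ^ (n+1)) • U (ind1 μ p (hmeas [])) =
        (U (∑ s ∈ level n, c' s • ind1 μ p (hmeas s)) -
          ((∑ s ∈ level n, c' s) / 2 ^ n) • U (ind1 μ p (hmeas []))) +
        ∑ s ∈ level n, d s • U (ind1 μ p (hmeas (false :: s)) -
          ind1 μ p (hmeas (true :: s))) := by
      rw [hsum1, hsum2, Finset.sum_add_distrib, map_add]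
      simp only [map_sum, _root_.map_smul]
      abel
    rw [hexpand]
    refine (norm_add_le _ _).trans ?_
    rw [Finset.sum_range_succ]
    have hbound : ‖∑ s ∈ level n, d s • U (ind1 μ p (hmeas (false :: s)) -
        ind1 μ p (hmeas (true :: s)))‖ ≤ 2 ^ n * (ε₁ / 4 ^ (n + 1)) := by
      refine (norm_sum_le _ _).trans ?_
      have : ∀ s ∈ level n, ‖d s • U (ind1 μ p (hmeas (false :: s)) -
          ind1 μ p (hmeas (true :: s)))‖ ≤ ε₁ / 4 ^ (n + 1) := by
        intro s hs
        rw [norm_smul]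
        calc ‖d s‖ * ‖U (ind1 μ p (hmeas (false :: s)) - ind1 μ p (hmeas (true :: s)))‖
            ≤ 1 * (ε₁ / 4 ^ (s.length + 1)) := by
              refine mul_le_mul (hd s) (hnorm s) (norm_nonneg _) zero_le_one
          _ = ε₁ / 4 ^ (n + 1) := by rw [mem_level.1 hs]; ring
      refine (Finset.sum_le_sum this).trans ?_
      rw [Finset.sum_const, card_level, nsmul_eq_mul]
      push_cast
      ring_nf
      exact le_refl _
    have := ih c' hc'
    linarith
end Haar


/-- auxiliary tree recursion -/
def treeAux (g : Set Ω → ℕ → Set Ω × Set Ω) (A : Set Ω) : List Bool → Set Ω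
  | [] => A
  | b :: s => Bool.rec (g (treeAux g A s) s.length).1 (g (treeAux g A s) s.length).2 b

theorem tree_exists (μ : Measure Ω) [IsFiniteMeasure μ] (p : ℝ≥0∞) [Fact (1 ≤ p)]
    {X : Type*} [NormedAddCommGroup X] [NormedSpace ℝ X]
    (U : Lp ℝ p μ →L[ℝ] X) (hU : PPNarrow μ p U)
    {A : Set Ω} (hA : MeasurableSet A) (h0 : 0 < μ A) {ε₁ : ℝ} (hε₁ : 0 < ε₁) :
    ∃ (T : List Bool → Set Ω) (hmeas : ∀ s, MeasurableSet (T s)),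
      T [] = A ∧ (∀ s, μ (T s) = μ A / 2 ^ s.length) ∧
      (∀ s, Disjoint (T (false :: s)) (T (true :: s))) ∧
      (∀ s, T (false :: s) ∪ T (true :: s) = T s) ∧
      (∀ s, ‖U (indicatorConstLp p (hmeas (false :: s)) (measure_ne_top μ _) (1 : ℝ) -
        indicatorConstLp p (hmeas (true :: s)) (measure_ne_top μ _) (1 : ℝ))‖ ≤
          ε₁ / 4 ^ (s.length + 1)) := by
  classical
  have step : ∀ (B : Set Ω) (n : ℕ), ∃ P : Set Ω × Set Ω,
      MeasurableSet B → 0 < μ B →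
      ∃ (h₁ : MeasurableSet P.1) (h₂ : MeasurableSet P.2),
        Disjoint P.1 P.2 ∧ P.1 ∪ P.2 = B ∧ μ P.1 = μ B / 2 ∧ μ P.2 = μ B / 2 ∧
        ‖U (indicatorConstLp p h₁ (measure_ne_top μ _) (1 : ℝ) -
          indicatorConstLp p h₂ (measure_ne_top μ _) (1 : ℝ))‖ ≤ ε₁ / 4 ^ (n + 1) := by
    intro B n
    by_cases h : MeasurableSet B ∧ 0 < μ B
    · obtain ⟨f, ⟨B₁, B₂, h₁, h₂, hdisj, hunion, hμeq, rfl⟩, hnorm⟩ :=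
        hU B h.1 h.2 (ε₁ / 4 ^ (n + 1)) (by positivity)
      have hsum : μ B₁ + μ B₂ = μ B := by
        rw [← hunion]; exact (measure_union hdisj h₂).symm
      have h2 : μ B₂ = μ B / 2 := by
        rw [eq_div_iff (two_ne_zero) (ofNat_ne_top), two_mul, ← hμeq]
        nth_rewrite 2 [hμeq]
        exact hsum
      exact ⟨(B₁, B₂), fun _ _ => ⟨h₁, h₂, hdisj, hunion, hμeq.trans h2, h2, hnorm⟩⟩
    · exact ⟨(∅, ∅), fun hB hμB => absurd ⟨hB, hμB⟩ h⟩
  choose g hg using step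
  set T : List Bool → Set Ω := treeAux g A with hT
  have base : ∀ s : List Bool, MeasurableSet (T s) ∧ μ (T s) = μ A / 2 ^ s.length := by
    intro s
    induction s with
    | nil => exact ⟨hA, by simp [hT, treeAux]⟩
    | cons b s ih =>
      have hpos : 0 < μ (T s) := by
        rw [ih.2]
        exact ENNReal.div_pos h0.ne' (ENNReal.pow_ne_top (by norm_num))
      obtain ⟨h₁, h₂, hdisj, hunion, hμ1, hμ2, hnorm⟩ := hg (T s) s.length ih.1 hpos
      have hhalf : μ A / 2 ^ s.length / 2 = μ A / 2 ^ (b :: s).length := by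
        rw [div_eq_mul_inv, div_eq_mul_inv, div_eq_mul_inv, mul_assoc,
          ← ENNReal.mul_inv (by simp) (by simp), List.length_cons, pow_succ]
      cases b
      · exact ⟨h₁, by rw [show T (false :: s) = (g (T s) s.length).1 from rfl, hμ1, ih.2, hhalf]⟩
      · exact ⟨h₂, by rw [show T (true :: s) = (g (T s) s.length).2 from rfl, hμ2, ih.2, hhalf]⟩
  have hpos : ∀ s, 0 < μ (T s) := fun s => by
    rw [(base s).2]; exact ENNReal.div_pos h0.ne' (ENNReal.pow_ne_top (by norm_num))
  refine ⟨T, fun s => (base s).1, rfl, fun s => (base s).2, fun s => ?_, fun s => ?_, fun s => ?_⟩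
  · exact (hg (T s) s.length (base s).1 (hpos s)).choose_spec.choose_spec.1
  · exact (hg (T s) s.length (base s).1 (hpos s)).choose_spec.choose_spec.2.1
  · exact (hg (T s) s.length (base s).1 (hpos s)).choose_spec.choose_spec.2.2.2.2



section Tree

variable {T : List Bool → Set Ω} {A : Set Ω}

lemma cell_subset (hunion : ∀ s, T (false :: s) ∪ T (true :: s) = T s) (b : Bool)
    (s : List Bool) : T (b :: s) ⊆ T s := by
  cases b
  · rw [← hunion s]; exact subset_union_left
  · rw [← hunion s]; exact subset_union_right

lemma cell_subset_base (hbase : T [] = A)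
    (hunion : ∀ s, T (false :: s) ∪ T (true :: s) = T s) : ∀ s, T s ⊆ A := by
  intro s
  induction s with
  | nil => exact hbase.le
  | cons b s ih => exact (cell_subset hunion b s).trans ih

lemma cells_disjoint (hunion : ∀ s, T (false :: s) ∪ T (true :: s) = T s)
    (hdisj : ∀ s, Disjoint (T (false :: s)) (T (true :: s))) :
    ∀ (n : ℕ) (s t : List Bool), s.length = n → t.length = n → s ≠ t →
      Disjoint (T s) (T t) := by
  intro n
  induction n with
  | zero =>
    intro s t hs ht hst
    rw [List.length_eq_zero_iff] at hs ht
    exact absurd (hs.trans ht.symm) hst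
  | succ n ih =>
    rintro (_ | ⟨a, s⟩) (_ | ⟨b, t⟩) hs ht hst
    · simp at hs
    · simp at hs
    · simp at ht
    simp only [List.length_cons, Nat.add_right_cancel_iff] at hs ht
    by_cases h : s = t
    · subst h
      have hab : a ≠ b := fun h => hst (by rw [h])
      cases a <;> cases b
      · exact absurd rfl hab
      · exact hdisj s
      · exact (hdisj s).symm
      · exact absurd rfl hab
    · exact Set.disjoint_of_subset (cell_subset hunion a s) (cell_subset hunion b t)
        (ih s t hs ht h)

lemma level_union_eq (hbase : T [] = A)
    (hunion : ∀ s, T (false :: s) ∪ T (true :: s) = T s) :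
    ∀ n, ⋃ s ∈ level n, T s = A := by
  intro n
  induction n with
  | zero => simpa [level] using hbase
  | succ n ih =>
    rw [level_biUnion n T]
    rw [← ih]
    exact iUnion₂_congr fun s _ => hunion s

lemma sdiff_union (hbase : T [] = A)
    (hunion : ∀ s, T (false :: s) ∪ T (true :: s) = T s)
    (hdisj : ∀ s, Disjoint (T (false :: s)) (T (true :: s)))
    (n : ℕ) (F : Finset (List Bool)) (hF : F ⊆ level n) :
    A \ (⋃ s ∈ F, T s) = ⋃ s ∈ level n \ F, T s := by
  ext x
  simp only [Set.mem_diff, Set.mem_iUnion, exists_prop, Finset.mem_sdiff]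
  constructor
  · rintro ⟨hxA, hxF⟩
    rw [← level_union_eq hbase hunion n] at hxA
    simp only [Set.mem_iUnion, exists_prop] at hxA
    obtain ⟨s, hs, hxs⟩ := hxA
    refine ⟨s, ⟨hs, fun hsF => hxF ?_⟩, hxs⟩
    exact ⟨s, hsF, hxs⟩
  · rintro ⟨s, ⟨hs, hsF⟩, hxs⟩
    refine ⟨cell_subset_base hbase hunion s hxs, fun hx => ?_⟩
    obtain ⟨t, htF, hxt⟩ := hx
    have hne : s ≠ t := fun h => hsF (h ▸ htF)
    exact (cells_disjoint hunion hdisj n s t (mem_level.1 hs) (mem_level.1 (hF htF)) hne).le_bot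
      ⟨hxs, hxt⟩ |>.elim

lemma refine_level (hunion : ∀ s, T (false :: s) ∪ T (true :: s) = T s)
    {n m : ℕ} (hnm : n ≤ m) (F : Finset (List Bool)) (hF : F ⊆ level n) :
    ∃ G ⊆ level m, (⋃ s ∈ G, T s) = ⋃ s ∈ F, T s := by
  classical
  induction m, hnm using Nat.le_induction with
  | base => exact ⟨F, hF, rfl⟩
  | succ m hm ih =>
    obtain ⟨G, hG, hGF⟩ := ih
    refine ⟨G.biUnion (fun s => {false :: s, true :: s}), ?_, ?_⟩
    · intro t ht
      simp only [Finset.mem_biUnion, Finset.mem_insert, Finset.mem_singleton] at ht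
      obtain ⟨s, hs, rfl | rfl⟩ := ht <;>
        simp [mem_level, mem_level.1 (hG hs)]
    · rw [Finset.set_biUnion_biUnion, ← hGF]
      refine iUnion₂_congr fun s _ => ?_
      rw [show (⋃ t ∈ ({false :: s, true :: s} : Finset (List Bool)), T t) =
        T (false :: s) ∪ T (true :: s) by simp]
      exact hunion s

lemma struct (hbase : T [] = A)
    (hunion : ∀ s, T (false :: s) ∪ T (true :: s) = T s)
    (hdisj : ∀ s, Disjoint (T (false :: s)) (T (true :: s))) :
    ∀ t ∈ generateSetAlgebra (Set.range T),
      ∃ n, ∃ F ⊆ level n, t ∩ A = ⋃ s ∈ F, T s := by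
  classical
  intro t ht
  induction ht with
  | base s hs =>
    obtain ⟨u, rfl⟩ := hs
    refine ⟨u.length, {u}, by simp [mem_level], ?_⟩
    simp [Set.inter_eq_left.2 (cell_subset_base hbase hunion u)]
  | empty => exact ⟨0, ∅, by simp, by simp⟩
  | compl s hs ih =>
    obtain ⟨n, F, hF, heq⟩ := ih
    refine ⟨n, level n \ F, Finset.sdiff_subset, ?_⟩
    rw [← sdiff_union hbase hunion hdisj n F hF, ← heq]
    ext x
    simp only [Set.mem_inter_iff, Set.mem_compl_iff, Set.mem_diff]
    tauto
  | union s t hs ht ihs iht =>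
    obtain ⟨n₁, F₁, hF₁, heq₁⟩ := ihs
    obtain ⟨n₂, F₂, hF₂, heq₂⟩ := iht
    obtain ⟨G₁, hG₁, hGeq₁⟩ := refine_level hunion (le_max_left n₁ n₂) F₁ hF₁
    obtain ⟨G₂, hG₂, hGeq₂⟩ := refine_level hunion (le_max_right n₁ n₂) F₂ hF₂
    refine ⟨max n₁ n₂, G₁ ∪ G₂, Finset.union_subset hG₁ hG₂, ?_⟩
    rw [Set.union_inter_distrib_right, heq₁, heq₂, ← hGeq₁, ← hGeq₂]
    rw [Finset.set_biUnion_union]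

end Tree


end PPAux

set_option maxHeartbeats 1000000 in
/-- Proposition 2.5(a). If `U : L_p(μ) → X` is PP-narrow and
`V : L_p(μ) → X` is hereditarily PP-narrow, then `U + V` is PP-narrow. -/
theorem ppNarrow_add_hppNarrow
    (μ : Measure Ω) [IsProbabilityMeasure μ] [NullSingletonClass μ]
    (p : ℝ≥0∞) [Fact (1 ≤ p)] (hp : p ≠ ∞)
    {X : Type*} [NormedAddCommGroup X] [NormedSpace ℝ X] [CompleteSpace X]
    (U V : Lp ℝ p μ →L[ℝ] X) (hU : PPNarrow μ p U) (hV : HPPNarrow μ p V) :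
    PPNarrow μ p (U + V) := by
  classical
  intro A hA h0 ε hε
  have hp0 : p ≠ 0 := (lt_of_lt_of_le zero_lt_one (Fact.out : (1:ℝ≥0∞) ≤ p)).ne'
  have hpt : 0 < p.toReal := ENNReal.toReal_pos hp0 hp
  set ε₁ : ℝ := ε / 6 with hε₁def
  have hε₁ : 0 < ε₁ := by positivity
  obtain ⟨T, hmeas, hbase, hμT, hdisj, hunion, hnormT⟩ :=
    PPAux.tree_exists μ p U hU hA h0 hε₁
  -- the sub-σ-algebra generated by the tree
  have hle : MeasurableSpace.generateFrom (Set.range T) ≤ ‹MeasurableSpace Ω› := by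
    refine MeasurableSpace.generateFrom_le ?_
    rintro _ ⟨s, rfl⟩; exact hmeas s
  set S : Set (Set Ω) :=
    {B | MeasurableSet[MeasurableSpace.generateFrom (Set.range T)] B ∧ B ⊆ A} with hSdef
  have hTA : ∀ s, T s ⊆ A := PPAux.cell_subset_base hbase hunion
  have hTm' : ∀ s, MeasurableSet[MeasurableSpace.generateFrom (Set.range T)] (T s) := fun s =>
    MeasurableSpace.measurableSet_generateFrom ⟨s, rfl⟩
  have hAm' : MeasurableSet[MeasurableSpace.generateFrom (Set.range T)] A := hbase ▸ hTm' []
  have hSS : IsSubSigmaAlgebraOn A S :=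
    { measurable := fun B hB => hle _ hB.1
      subset := fun B hB => hB.2
      top_mem := ⟨hAm', subset_rfl⟩
      diff_mem := fun B hB => ⟨hAm'.diff hB.1, diff_subset⟩
      iUnion_mem := fun g hg =>
        ⟨MeasurableSet.iUnion (fun n => (hg n).1), Set.iUnion_subset fun n => (hg n).2⟩ }
  have hlevU : ∀ n, ⋃ s ∈ PPAux.level n, T s = A := PPAux.level_union_eq hbase hunion
  have hNon : NonatomicOn μ S := by
    rintro B ⟨hBm, hBA⟩ hB0
    obtain ⟨n, hn⟩ := ENNReal.exists_inv_two_pow_lt hB0.ne'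
    have hlt : μ A / 2 ^ n < μ B := by
      calc μ A / 2 ^ n ≤ 1 / 2 ^ n := by gcongr; exact prob_le_one
        _ = 2⁻¹ ^ n := by rw [one_div, ENNReal.inv_pow]
        _ < μ B := hn
    have hBcup : B = ⋃ s ∈ PPAux.level n, B ∩ T s := by
      rw [← Set.inter_iUnion₂, hlevU n, Set.inter_eq_left.2 hBA]
    have hcover : μ B ≤ ∑ s ∈ PPAux.level n, μ (B ∩ T s) := by
      calc μ B = μ (⋃ s ∈ PPAux.level n, B ∩ T s) := by rw [← hBcup]
        _ ≤ ∑ s ∈ PPAux.level n, μ (B ∩ T s) := measure_biUnion_finset_le _ _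
    have hex : ∃ s ∈ PPAux.level n, 0 < μ (B ∩ T s) := by
      by_contra hcon
      push_neg at hcon
      have hzero : ∑ s ∈ PPAux.level n, μ (B ∩ T s) = 0 :=
        Finset.sum_eq_zero fun s hs => le_antisymm (hcon s hs) (by positivity)
      rw [hzero] at hcover
      exact absurd (le_antisymm hcover (by positivity)) hB0.ne'
    obtain ⟨s, hs, hpos⟩ := hex
    refine ⟨B ∩ T s, ⟨hBm.inter (hTm' s), Set.inter_subset_left.trans hBA⟩,
      Set.inter_subset_left, hpos, ?_⟩
    calc μ (B ∩ T s) ≤ μ (T s) := measure_mono Set.inter_subset_right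
      _ = μ A / 2 ^ n := by rw [hμT s, PPAux.mem_level.1 hs]
      _ < μ B := hlt
  -- apply hereditary PP-narrowness of V
  obtain ⟨f, hsign, hVf⟩ := hV A hA h0 S hSS hNon A hSS.top_mem h0 (ε / 2) (by positivity)
  obtain ⟨B₁, hB₁S, B₂, hB₂S, h₁, h₂, hdisj12, hunion12, hμ12, hfeq⟩ := hsign
  refine ⟨f, ⟨B₁, B₂, h₁, h₂, hdisj12, hunion12, hμ12, hfeq⟩, ?_⟩
  have hB₁A : B₁ ⊆ A := hB₁S.2
  -- basic measure facts
  set m0 : ℝ := (μ A).toReal with hm0def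
  have hm0pos : 0 < m0 := ENNReal.toReal_pos h0.ne' (measure_ne_top μ A)
  have hμB₁ : μ B₁ = μ A / 2 := by
    have hsum : μ B₁ + μ B₂ = μ A := by
      rw [← hunion12]; exact (measure_union hdisj12 h₂).symm
    rw [ENNReal.eq_div_iff two_ne_zero ofNat_ne_top, two_mul]
    nth_rewrite 1 [hμ12]
    rw [← hsum]; ring
  have hB₂eq : B₂ = A \ B₁ := by
    rw [← hunion12]
    exact (Set.union_diff_cancel_left (by rw [hdisj12.inter_eq])).symm
  -- measure-dense approximation
  have hgen : MeasurableSpace.generateFrom (Set.range T) =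
      MeasurableSpace.generateFrom (generateSetAlgebra (Set.range T)) :=
    generateFrom_generateSetAlgebra_eq.symm
  have hdense := @Measure.MeasureDense.of_generateFrom_isSetAlgebra_finite Ω
    (MeasurableSpace.generateFrom (Set.range T)) (μ.trim hle) _
    (isFiniteMeasure_trim hle) isSetAlgebra_generateSetAlgebra hgen
  set e0 : Lp ℝ p μ := PPAux.ind1 μ p (hmeas []) with he0
  set CU : ℝ := ‖U‖ + 1 with hCU
  set CA : ℝ := ‖U e0‖ + 1 with hCA
  have hCUpos : 0 < CU := by positivity
  have hCApos : 0 < CA := by positivity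
  set r₁ : ℝ := ε / (12 * CU) with hr₁
  set r₂ : ℝ := m0 * ε / (12 * CA) with hr₂
  have hr₁pos : 0 < r₁ := by positivity
  have hr₂pos : 0 < r₂ := by positivity
  set εap : ℝ := min (r₁ ^ p.toReal) r₂ with hεap
  have hεappos : 0 < εap := lt_min (Real.rpow_pos_of_pos hr₁pos _) hr₂pos
  obtain ⟨t, ht𝒜, htap⟩ := @Measure.MeasureDense.approx Ω
    (MeasurableSpace.generateFrom (Set.range T)) (μ.trim hle) _ hdense B₁ hB₁S.1
    (by rw [trim_measurableSet_eq hle hB₁S.1]; exact measure_ne_top μ B₁) εap hεappos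
  have htm' : MeasurableSet[MeasurableSpace.generateFrom (Set.range T)] t :=
    hgen ▸ MeasurableSpace.measurableSet_generateFrom ht𝒜
  have htap' : μ (B₁ ∆ t) < ENNReal.ofReal εap := by
    rwa [trim_measurableSet_eq hle (MeasurableSet.symmDiff hB₁S.1 htm')] at htap
  obtain ⟨n, F, hFlev, htA⟩ := PPAux.struct hbase hunion hdisj t ht𝒜
  set t' : Set Ω := ⋃ s ∈ F, T s with ht'def
  have ht'A : t' ⊆ A := Set.iUnion₂_subset fun s _ => hTA s
  have hsdB : μ (B₁ ∆ t') < ENNReal.ofReal εap := by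
    refine lt_of_le_of_lt (measure_mono ?_) htap'
    intro x hx
    rw [Set.mem_symmDiff] at hx ⊢
    rw [show t' = t ∩ A from htA.symm] at hx
    rcases hx with ⟨hx1, hx2⟩ | ⟨hx1, hx2⟩
    · exact Or.inl ⟨hx1, fun h => hx2 ⟨h, hB₁A hx1⟩⟩
    · exact Or.inr ⟨hx1.1, hx2⟩
  have hmt' : MeasurableSet t' := Finset.measurableSet_biUnion F (fun s _ => hmeas s)
  have hmAt' : MeasurableSet (A \ t') := hA.diff hmt'
  -- disjointness of cells in F and in the complement
  have hdF : ∀ (G : Finset (List Bool)), G ⊆ PPAux.level n →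
      ∀ i ∈ G, ∀ j ∈ G, i ≠ j → Disjoint (T i) (T j) := by
    intro G hG i hi j hj hij
    exact PPAux.cells_disjoint hunion hdisj n i j
      (PPAux.mem_level.1 (hG hi)) (PPAux.mem_level.1 (hG hj)) hij
  have hAt'eq : A \ t' = ⋃ s ∈ PPAux.level n \ F, T s :=
    PPAux.sdiff_union hbase hunion hdisj n F hFlev
  -- the coefficients
  set c : List Bool → ℝ := fun s => if s ∈ F then 1 else -1 with hcdef
  set h : Lp ℝ p μ := ∑ s ∈ PPAux.level n, c s • PPAux.ind1 μ p (hmeas s) with hhdef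
  set κ : ℝ := (∑ s ∈ PPAux.level n, c s) / 2 ^ n with hκdef
  have hstep := PPAux.haar_est μ p U T hmeas hunion hdisj ε₁ hnormT n c
    (fun s => by by_cases hh : s ∈ F <;> simp [hcdef, hh])
  -- geometric bound
  have hgeom : ∑ k ∈ Finset.range n, (2:ℝ) ^ k * (ε₁ / 4 ^ (k + 1)) ≤ ε₁ / 2 := by
    have hterm : ∀ k, (2:ℝ) ^ k * (ε₁ / 4 ^ (k + 1)) = (ε₁ / 4) * (1 / 2) ^ k := by
      intro k
      rw [show (4:ℝ) = 2 * 2 by norm_num, mul_pow]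
      field_simp
      rw [one_div, inv_pow, eq_mul_inv_iff_mul_eq₀ (pow_ne_zero _ two_ne_zero)]; ring
    rw [Finset.sum_congr rfl (fun k _ => hterm k), ← Finset.mul_sum]
    calc (ε₁ / 4) * ∑ k ∈ Finset.range n, (1 / (2:ℝ)) ^ k
        ≤ (ε₁ / 4) * 2 := by
          refine mul_le_mul_of_nonneg_left (sum_geometric_two_le n) (by positivity)
      _ ≤ ε₁ / 2 := by linarith
  have hUh : ‖U h - κ • U e0‖ ≤ ε₁ := le_trans hstep (by linarith)
  -- split of h into indicators
  have hsum_t' : indicatorConstLp p hmt' (measure_ne_top μ t') (1:ℝ) =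
      ∑ s ∈ F, PPAux.ind1 μ p (hmeas s) :=
    PPAux.sum_ind μ p F T hmeas (hdF F hFlev)
  have hsum_At' : indicatorConstLp p hmAt' (measure_ne_top μ (A \ t')) (1:ℝ) =
      ∑ s ∈ PPAux.level n \ F, PPAux.ind1 μ p (hmeas s) := by
    rw [PPAux.ind_congr μ p hAt'eq hmAt'
      (Finset.measurableSet_biUnion _ (fun s _ => hmeas s))]
    exact PPAux.sum_ind μ p _ T hmeas (hdF _ Finset.sdiff_subset)
  have hsplit : h = indicatorConstLp p hmt' (measure_ne_top μ t') (1:ℝ) -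
      indicatorConstLp p hmAt' (measure_ne_top μ (A \ t')) (1:ℝ) := by
    rw [hhdef, show PPAux.level n = F ∪ (PPAux.level n \ F) from
      (Finset.union_sdiff_of_subset hFlev).symm,
      Finset.sum_union (Finset.disjoint_sdiff)]
    rw [Finset.sum_congr rfl (fun s hs => show c s • PPAux.ind1 μ p (hmeas s) =
      PPAux.ind1 μ p (hmeas s) by rw [hcdef]; simp only [if_pos hs, one_smul])]
    rw [Finset.sum_congr rfl (fun s hs => show c s • PPAux.ind1 μ p (hmeas s) =
      -PPAux.ind1 μ p (hmeas s) by
        rw [hcdef]; simp only [if_neg (Finset.mem_sdiff.1 hs).2, neg_one_smul])]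
    rw [Finset.sum_neg_distrib, hsum_t', hsum_At']
    abel
  -- bound ‖f - h‖
  have hbnd : ∀ {B C : Set Ω} (hB : MeasurableSet B) (hC : MeasurableSet C),
      μ (B ∆ C) < ENNReal.ofReal εap →
      ‖indicatorConstLp p hB (measure_ne_top μ B) (1:ℝ) -
        indicatorConstLp p hC (measure_ne_top μ C) (1:ℝ)‖ ≤ r₁ := by
    intro B C hB hC hBC
    refine (PPAux.norm_ind_sub_le μ p hp hB hC).trans ?_
    have h1 : μ (B ∆ C) ≤ ENNReal.ofReal r₁ ^ p.toReal := by
      refine hBC.le.trans ?_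
      calc ENNReal.ofReal εap ≤ ENNReal.ofReal (r₁ ^ p.toReal) :=
            ENNReal.ofReal_le_ofReal (by rw [hεap]; exact min_le_left _ _)
        _ = ENNReal.ofReal r₁ ^ p.toReal := (ENNReal.ofReal_rpow_of_pos hr₁pos).symm
    have h2 : μ (B ∆ C) ^ (1 / p.toReal) ≤ ENNReal.ofReal r₁ := by
      calc μ (B ∆ C) ^ (1 / p.toReal)
          ≤ (ENNReal.ofReal r₁ ^ p.toReal) ^ (1 / p.toReal) :=
            ENNReal.rpow_le_rpow h1 (by positivity)
        _ = ENNReal.ofReal r₁ := by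
            rw [← ENNReal.rpow_mul, mul_one_div_cancel hpt.ne', ENNReal.rpow_one]
    exact ENNReal.toReal_le_of_le_ofReal hr₁pos.le h2
  have hB₂sym : B₂ ∆ (A \ t') = B₁ ∆ t' := by
    rw [hB₂eq]
    ext x
    by_cases hxA : x ∈ A
    · simp only [Set.mem_symmDiff, Set.mem_diff, hxA, true_and]
      tauto
    · have hx1 : x ∉ B₁ := fun hh => hxA (hB₁A hh)
      have hx2 : x ∉ t' := fun hh => hxA (ht'A hh)
      simp [Set.mem_symmDiff, Set.mem_diff, hxA, hx1, hx2]
  have hfh : ‖f - h‖ ≤ 2 * r₁ := by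
    have hfhe : f - h = (indicatorConstLp p h₁ (measure_ne_top μ B₁) (1:ℝ) -
        indicatorConstLp p hmt' (measure_ne_top μ t') (1:ℝ)) -
        (indicatorConstLp p h₂ (measure_ne_top μ B₂) (1:ℝ) -
        indicatorConstLp p hmAt' (measure_ne_top μ (A \ t')) (1:ℝ)) := by
      rw [hfeq, hsplit]; abel
    rw [hfhe]
    refine (norm_sub_le _ _).trans ?_
    have hb1 : ‖indicatorConstLp p h₁ (measure_ne_top μ B₁) (1:ℝ) -
        indicatorConstLp p hmt' (measure_ne_top μ t') (1:ℝ)‖ ≤ r₁ := hbnd h₁ hmt' hsdB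
    have hb2 : ‖indicatorConstLp p h₂ (measure_ne_top μ B₂) (1:ℝ) -
        indicatorConstLp p hmAt' (measure_ne_top μ (A \ t')) (1:ℝ)‖ ≤ r₁ :=
      hbnd h₂ hmAt' (by rw [hB₂sym]; exact hsdB)
    linarith
  have hUfh : ‖U (f - h)‖ ≤ ε / 6 := by
    calc ‖U (f - h)‖ ≤ ‖U‖ * ‖f - h‖ := U.le_opNorm _
      _ ≤ CU * (2 * r₁) := by
          refine mul_le_mul (by rw [hCU]; linarith) hfh (norm_nonneg _) hCUpos.le
      _ = ε / 6 := by rw [hr₁]; field_simp; ring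
  -- bound the κ term
  have hwR : ∀ s ∈ PPAux.level n, (μ (T s)).toReal = m0 / 2 ^ n := by
    intro s hs
    rw [hμT s, PPAux.mem_level.1 hs, ENNReal.toReal_div]
    norm_num [hm0def]
  have hμt'R : (μ t').toReal = ∑ s ∈ F, (μ (T s)).toReal := by
    rw [ht'def, measure_biUnion_finset ?_ (fun s _ => hmeas s),
      ENNReal.toReal_sum (fun s _ => measure_ne_top μ _)]
    intro i hi j hj hij
    exact hdF F hFlev i hi j hj hij
  have hμAt'R : (μ (A \ t')).toReal = ∑ s ∈ PPAux.level n \ F, (μ (T s)).toReal := by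
    rw [hAt'eq, measure_biUnion_finset ?_ (fun s _ => hmeas s),
      ENNReal.toReal_sum (fun s _ => measure_ne_top μ _)]
    intro i hi j hj hij
    exact hdF _ Finset.sdiff_subset i hi j hj hij
  have hm0split : m0 = (μ t').toReal + (μ (A \ t')).toReal := by
    rw [hm0def, ← ENNReal.toReal_add (measure_ne_top μ _) (measure_ne_top μ _),
      ← measure_union (Set.disjoint_sdiff_right) hmAt', Set.union_diff_cancel ht'A]
  have hsumc : (∑ s ∈ PPAux.level n, c s) * (m0 / 2 ^ n) =
      (μ t').toReal - (μ (A \ t')).toReal := by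
    rw [Finset.sum_mul]
    rw [show PPAux.level n = F ∪ (PPAux.level n \ F) from
      (Finset.union_sdiff_of_subset hFlev).symm, Finset.sum_union (Finset.disjoint_sdiff)]
    rw [Finset.sum_congr rfl (fun s hs => show c s * (m0 / 2^n) = (μ (T s)).toReal by
      rw [hcdef]; simp only [if_pos hs, one_mul]; exact (hwR s (hFlev hs)).symm)]
    rw [Finset.sum_congr rfl (fun s hs => show c s * (m0 / 2^n) = -(μ (T s)).toReal by
      rw [hcdef]; simp only [if_neg (Finset.mem_sdiff.1 hs).2, neg_one_mul]
      rw [hwR s (Finset.mem_sdiff.1 hs).1]),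
      Finset.sum_neg_distrib, hμt'R, hμAt'R]
    ring
  have hκeq : κ * m0 = 2 * (μ t').toReal - m0 := by
    have h2n : (0:ℝ) < 2 ^ n := by positivity
    have : κ * m0 = (∑ s ∈ PPAux.level n, c s) * (m0 / 2 ^ n) := by
      rw [hκdef]; field_simp
    rw [this, hsumc, hm0split]; ring
  have hsdBR : (μ (B₁ ∆ t')).toReal ≤ r₂ := by
    refine ENNReal.toReal_le_of_le_ofReal hr₂pos.le ?_
    exact hsdB.le.trans (ENNReal.ofReal_le_ofReal (min_le_right _ _))
  have hμB₁R : (μ B₁).toReal = m0 / 2 := by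
    rw [hμB₁, ENNReal.toReal_div, hm0def]
    norm_num
  have habs : |(μ t').toReal - m0 / 2| ≤ r₂ := by
    have h1 := PPAux.toReal_abs_sub_le μ (B := t') (C := B₁)
    rw [symmDiff_comm, hμB₁R] at h1
    exact h1.trans hsdBR
  have hκbound : |κ| ≤ ε / (6 * CA) := by
    have : |κ| * m0 ≤ 2 * r₂ := by
      calc |κ| * m0 = |κ * m0| := by
            rw [abs_mul, abs_of_pos hm0pos]
        _ = |2 * ((μ t').toReal - m0 / 2)| := by rw [hκeq]; ring_nf
        _ = 2 * |(μ t').toReal - m0 / 2| := by rw [abs_mul]; norm_num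
        _ ≤ 2 * r₂ := by linarith
    have h2 : 2 * r₂ = (ε / (6 * CA)) * m0 := by rw [hr₂]; field_simp; ring
    rw [h2] at this
    exact le_of_mul_le_mul_right (by linarith) hm0pos
  have hκterm : ‖κ • U e0‖ ≤ ε / 6 := by
    rw [norm_smul, Real.norm_eq_abs]
    calc |κ| * ‖U e0‖ ≤ (ε / (6 * CA)) * CA := by
          refine mul_le_mul hκbound (by rw [hCA]; linarith) (norm_nonneg _) (by positivity)
      _ = ε / 6 := by field_simp
  -- put the three pieces together
  have hUf : ‖U f‖ ≤ ε / 2 := by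
    have hdecomp : U f = U (f - h) + (U h - κ • U e0) + κ • U e0 := by
      rw [map_sub]; abel
    rw [hdecomp]
    calc ‖U (f - h) + (U h - κ • U e0) + κ • U e0‖
        ≤ ‖U (f - h)‖ + ‖U h - κ • U e0‖ + ‖κ • U e0‖ := norm_add₃_le
      _ ≤ ε / 6 + ε / 6 + ε / 6 := by
          refine add_le_add (add_le_add hUfh (hUh.trans (by rw [hε₁def]))) hκterm
      _ = ε / 2 := by ring
  calc ‖(U + V) f‖ = ‖U f + V f‖ := by rw [ContinuousLinearMap.add_apply]
    _ ≤ ‖U f‖ + ‖V f‖ := norm_add_le _ _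
    _ ≤ ε / 2 + ε / 2 := add_le_add hUf hVf
    _ = ε := by ring
end
end

section
/- Let (Ω,Σ,μ) be a nonatomic probability space, X a Banach space, {h_α : α ∈ 𝒜_∞} a Haar-like system on a set A ∈ Σ⁺ in L₁ = L₁(Ω,Σ,μ), and U: L₁ → X a bounded linear operator which maps {h_α} into an unconditional basic sequence with unconditional constant β, i.e., for every finitely supported family of scalars (a_α) and every choice of signs θ_α ∈ {−1,1}, ‖∑_α θ_α a_α Uh_α‖ ≤ β ‖∑_α a_α Uh_α‖. Then for every finitely supported family of scalars (a_α), ‖U(∑_α a_α h_α)‖ ≤ 2 β² ‖U‖ μ(A) · sup_α |a_α|. -/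
open MeasureTheory ENNReal Set Filter

noncomputable section

variable {Ω : Type*} [MeasurableSpace Ω]

namespace StatementTenAux

/-- Real sign of a boolean. -/
def sgn (b : Bool) : ℝ := if b then 1 else -1

lemma sgn_pm (b : Bool) : sgn b = 1 ∨ sgn b = -1 := by cases b <;> simp [sgn]

lemma abs_sgn (b : Bool) : |sgn b| = 1 := by cases b <;> norm_num [sgn]

lemma sgn_not (b : Bool) : sgn (!b) = - sgn b := by cases b <;> norm_num [sgn]

/-- The finite set of all nodes of length `n`. -/
def Lev : ℕ → Finset (List Bool)
  | 0 => {[]}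
  | n + 1 => (Lev n).biUnion fun α => {α ++ [true], α ++ [false]}

lemma length_of_mem_Lev : ∀ {n : ℕ} {α : List Bool}, α ∈ Lev n → α.length = n
  | 0, α, h => by simp only [Lev, Finset.mem_singleton] at h; simp [h]
  | n + 1, α, h => by
      simp only [Lev, Finset.mem_biUnion, Finset.mem_insert, Finset.mem_singleton] at h
      obtain ⟨β, hβ, hc⟩ := h
      rcases hc with rfl | rfl <;>
        simp [List.length_append, length_of_mem_Lev hβ]

lemma mem_Lev_length (α : List Bool) : α ∈ Lev α.length := by
  induction α using List.reverseRecOn with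
  | nil => simp [Lev]
  | append_singleton α c ih =>
      have hl : (α ++ [c]).length = α.length + 1 := by simp
      rw [hl]
      simp only [Lev, Finset.mem_biUnion]
      exact ⟨α, ih, by cases c <;> simp⟩

lemma snoc_inj {x y : List Bool} {c d : Bool} (h : x ++ [c] = y ++ [d]) : x = y :=
  (List.append_inj' h rfl).1

lemma sum_Lev_succ {M : Type*} [AddCommMonoid M] (n : ℕ) (f : List Bool → M) :
    ∑ α ∈ Lev (n + 1), f α = ∑ α ∈ Lev n, (f (α ++ [true]) + f (α ++ [false])) := by
  have hdisj : Set.PairwiseDisjoint ↑(Lev n)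
      (fun α : List Bool => ({α ++ [true], α ++ [false]} : Finset (List Bool))) := by
    intro x _ y _ hxy
    simp only [Function.onFun, Finset.disjoint_left, Finset.mem_insert, Finset.mem_singleton]
    rintro a (rfl | rfl) h <;> rcases h with h | h <;> exact hxy (snoc_inj h)
  rw [show Lev (n + 1) = (Lev n).biUnion fun α => {α ++ [true], α ++ [false]} from rfl,
    Finset.sum_biUnion hdisj]
  refine Finset.sum_congr rfl fun α _ => ?_
  rw [Finset.sum_insert (by simp), Finset.sum_singleton]

variable {μ : Measure Ω} {A : Set Ω} {t : List Bool → Set Ω}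

lemma mReal_add [IsFiniteMeasure μ] (ht : IsTreeOn μ A t) (α : List Bool) :
    (μ (t (α ++ [true]))).toReal + (μ (t (α ++ [false]))).toReal = (μ (t α)).toReal := by
  rw [← ENNReal.toReal_add (measure_ne_top μ _) (measure_ne_top μ _),
    ← measure_union (ht.disj α) (ht.meas _), ht.union α]

lemma mReal_eq (ht : IsTreeOn μ A t) (α : List Bool) :
    (μ (t (α ++ [true]))).toReal = (μ (t (α ++ [false]))).toReal := by
  rw [ht.eqmeas α]

/-- Riesz-product weights. -/
def qwt (b : List Bool → ℝ) (σ : ℕ → ℝ) (α : List Bool) : ℝ :=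
  ∏ k ∈ Finset.range α.length, (1 + sgn (α.getD k true) * (σ k * b (α.take k)))

lemma qwt_nil (b : List Bool → ℝ) (σ : ℕ → ℝ) : qwt b σ [] = 1 := by simp [qwt]

lemma qwt_snoc (b : List Bool → ℝ) (σ : ℕ → ℝ) (α : List Bool) (c : Bool) :
    qwt b σ (α ++ [c]) = qwt b σ α * (1 + sgn c * (σ α.length * b α)) := by
  unfold qwt
  have hlen : (α ++ [c]).length = α.length + 1 := by simp
  rw [hlen, Finset.prod_range_succ]
  congr 1
  · refine Finset.prod_congr rfl fun k hk => ?_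
    have hk' := Finset.mem_range.1 hk
    rw [List.getD_append _ _ _ _ hk', List.take_append_of_le_length hk'.le]
  · rw [List.take_left (l₁ := α) (l₂ := [c]), List.getD_append_right _ _ _ _ (le_refl _)]
    simp

lemma qwt_congr {b : List Bool → ℝ} {σ₁ σ₂ : ℕ → ℝ} {α : List Bool}
    (h : ∀ k < α.length, σ₁ k = σ₂ k) : qwt b σ₁ α = qwt b σ₂ α :=
  Finset.prod_congr rfl fun k hk => by rw [h k (Finset.mem_range.1 hk)]

lemma qwt_nonneg {b : List Bool → ℝ} {σ : ℕ → ℝ}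
    (hb : ∀ γ, 0 ≤ b γ ∧ b γ ≤ 1) (hσ : ∀ k, |σ k| ≤ 1) (α : List Bool) :
    0 ≤ qwt b σ α := by
  refine Finset.prod_nonneg fun k _ => ?_
  have h1 : |sgn (α.getD k true) * (σ k * b (α.take k))| ≤ 1 := by
    rw [abs_mul, abs_sgn, one_mul, abs_mul]
    calc |σ k| * |b (α.take k)| ≤ 1 * 1 := by
          refine mul_le_mul (hσ k) ?_ (abs_nonneg _) zero_le_one
          rw [abs_of_nonneg (hb _).1]; exact (hb _).2
      _ = 1 := one_mul 1
  linarith [neg_abs_le (sgn (α.getD k true) * (σ k * b (α.take k)))]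

section LpPart

variable [IsProbabilityMeasure μ]

/-- The indicator of a tree node as an element of `L₁`. -/
def chiInd (ht : IsTreeOn μ A t) (α : List Bool) : Lp ℝ 1 μ :=
  indicatorConstLp 1 (ht.meas α) (measure_ne_top μ _) (1 : ℝ)

lemma indicatorConstLp_set_congr {s s' : Set Ω} (h : s = s')
    (hs : MeasurableSet s) (hs' : MeasurableSet s')
    (hμs : μ s ≠ ⊤) (hμs' : μ s' ≠ ⊤) (c : ℝ) :
    indicatorConstLp 1 hs hμs c = indicatorConstLp 1 hs' hμs' c := by
  subst h; rfl

lemma chiInd_split (ht : IsTreeOn μ A t) (α : List Bool) :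
    chiInd ht α = chiInd ht (α ++ [true]) + chiInd ht (α ++ [false]) := by
  rw [chiInd, chiInd, chiInd,
    ← indicatorConstLp_disjoint_union (ht.meas (α ++ [true])) (ht.meas (α ++ [false]))
      (measure_ne_top μ _) (measure_ne_top μ _) (ht.disj α)]
  exact indicatorConstLp_set_congr (ht.union α).symm _ _ _ _ _

lemma norm_chiInd (ht : IsTreeOn μ A t) (α : List Bool) :
    ‖chiInd ht α‖ = (μ (t α)).toReal := by
  rw [chiInd, norm_indicatorConstLp one_ne_zero ENNReal.one_ne_top]
  simp
  rfl

lemma haar_eq (ht : IsTreeOn μ A t) (α : List Bool) :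
    haarFn μ 1 t ht.meas α = chiInd ht (α ++ [true]) - chiInd ht (α ++ [false]) := rfl

/-- The truncated Riesz product, as an element of `L₁`. -/
def Sfun (ht : IsTreeOn μ A t) (b : List Bool → ℝ) (σ : ℕ → ℝ) (m : ℕ) : Lp ℝ 1 μ :=
  ∑ α ∈ Lev m, qwt b σ α • chiInd ht α

lemma Sfun_zero (ht : IsTreeOn μ A t) (b : List Bool → ℝ) (σ : ℕ → ℝ) :
    Sfun ht b σ 0 = chiInd ht [] := by
  simp [Sfun, Lev, qwt]

lemma Sfun_succ (ht : IsTreeOn μ A t) (b : List Bool → ℝ) (σ : ℕ → ℝ) (m : ℕ) :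
    Sfun ht b σ (m + 1) = Sfun ht b σ m
      + ∑ α ∈ Lev m, (σ m * (b α * qwt b σ α)) • haarFn μ 1 t ht.meas α := by
  rw [Sfun, sum_Lev_succ, Sfun, ← Finset.sum_add_distrib]
  refine Finset.sum_congr rfl fun α hα => ?_
  have hlen := length_of_mem_Lev hα
  rw [qwt_snoc, qwt_snoc, hlen, haar_eq ht, chiInd_split ht α]
  have h1 : sgn true = 1 := rfl
  have h2 : sgn false = -1 := rfl
  rw [h1, h2]
  module

lemma Sfun_eq (ht : IsTreeOn μ A t) (b : List Bool → ℝ) (σ : ℕ → ℝ) (N : ℕ) :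
    Sfun ht b σ N = chiInd ht []
      + ∑ m ∈ Finset.range N, ∑ α ∈ Lev m,
          (σ m * (b α * qwt b σ α)) • haarFn μ 1 t ht.meas α := by
  induction N with
  | zero => simp [Sfun_zero]
  | succ n ih => rw [Finset.sum_range_succ, Sfun_succ, ih]; abel

lemma mass (ht : IsTreeOn μ A t) (b : List Bool → ℝ) (σ : ℕ → ℝ) (m : ℕ) :
    ∑ α ∈ Lev m, qwt b σ α * (μ (t α)).toReal = (μ A).toReal := by
  induction m with
  | zero => simp [Lev, qwt, ht.root]
  | succ n ih =>
      rw [sum_Lev_succ, ← ih]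
      refine Finset.sum_congr rfl fun α hα => ?_
      have hlen := length_of_mem_Lev hα
      have h1 := mReal_eq ht α
      have h2 := mReal_add ht α
      rw [qwt_snoc, qwt_snoc, hlen]
      have h3 : sgn true = 1 := rfl
      have h4 : sgn false = -1 := rfl
      rw [h3, h4, h1] at *
      rw [← h2]
      ring

lemma qwt_zero_fn (σ : ℕ → ℝ) (α : List Bool) :
    qwt (fun _ => (0 : ℝ)) σ α = 1 := by
  unfold qwt; simp

lemma chiInd_root_eq (ht : IsTreeOn μ A t) (N : ℕ) :
    (chiInd ht [] : Lp ℝ 1 μ) = ∑ α ∈ Lev N, chiInd ht α := by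
  have h := Sfun_eq ht (fun _ => 0) (fun _ => 1) N
  rw [Sfun] at h
  simp only [qwt_zero_fn, one_smul, mul_zero, zero_mul, mul_one, zero_smul,
    Finset.sum_const_zero, add_zero] at h
  exact h.symm

lemma norm_Sfun_sub_le (ht : IsTreeOn μ A t) {b : List Bool → ℝ} {σ : ℕ → ℝ}
    (hb : ∀ γ, 0 ≤ b γ ∧ b γ ≤ 1) (hσ : ∀ k, |σ k| ≤ 1) (N : ℕ) :
    ‖Sfun ht b σ N - chiInd ht []‖ ≤ 2 * (μ A).toReal := by
  rw [chiInd_root_eq ht N, Sfun, ← Finset.sum_sub_distrib]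
  have hterm : ∀ α ∈ Lev N, qwt b σ α • chiInd ht α - chiInd ht α
      = (qwt b σ α - 1) • chiInd ht α := fun α _ => by rw [sub_smul, one_smul]
  rw [Finset.sum_congr rfl hterm]
  calc ‖∑ α ∈ Lev N, (qwt b σ α - 1) • chiInd ht α‖
      ≤ ∑ α ∈ Lev N, ‖(qwt b σ α - 1) • chiInd ht α‖ := norm_sum_le _ _
    _ = ∑ α ∈ Lev N, |qwt b σ α - 1| * (μ (t α)).toReal := by
        refine Finset.sum_congr rfl fun α _ => ?_
        rw [norm_smul, Real.norm_eq_abs, norm_chiInd]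
    _ ≤ ∑ α ∈ Lev N, (qwt b σ α + 1) * (μ (t α)).toReal := by
        refine Finset.sum_le_sum fun α _ => ?_
        refine mul_le_mul_of_nonneg_right ?_ ENNReal.toReal_nonneg
        have h0 := qwt_nonneg hb hσ α
        rw [abs_le]; constructor <;> linarith
    _ = (∑ α ∈ Lev N, qwt b σ α * (μ (t α)).toReal)
        + ∑ α ∈ Lev N, (μ (t α)).toReal := by
        rw [← Finset.sum_add_distrib]
        exact Finset.sum_congr rfl fun α _ => by ring
    _ = (μ A).toReal + (μ A).toReal := by
        rw [mass ht b σ N]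
        congr 1
        have h := mass ht (fun _ => 0) (fun _ => 1) N
        simp only [qwt_zero_fn, one_mul] at h
        exact h
    _ = 2 * (μ A).toReal := by ring

end LpPart

/-- Sign function attached to a boolean vector of length `N`. -/
def sig {N : ℕ} (σ : Fin N → Bool) : ℕ → ℝ :=
  fun k => if h : k < N then sgn (σ ⟨k, h⟩) else 1

lemma sig_pm {N : ℕ} (σ : Fin N → Bool) (k : ℕ) : sig σ k = 1 ∨ sig σ k = -1 := by
  unfold sig; split
  · exact sgn_pm _
  · exact Or.inl rfl

lemma sig_abs {N : ℕ} (σ : Fin N → Bool) (k : ℕ) : |sig σ k| ≤ 1 := by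
  rcases sig_pm σ k with h | h <;> rw [h] <;> norm_num

lemma sig_sq {N : ℕ} (σ : Fin N → Bool) (k : ℕ) : sig σ k * sig σ k = 1 := by
  rcases sig_pm σ k with h | h <;> rw [h] <;> norm_num

lemma sum_qwt (b : List Bool → ℝ) (N : ℕ) :
    ∀ α : List Bool, α.length ≤ N →
      ∑ σ : Fin N → Bool, qwt b (sig σ) α = 2 ^ N := by
  intro α
  induction α using List.reverseRecOn with
  | nil =>
      intro _
      simp only [qwt_nil, Finset.sum_const, Finset.card_univ, nsmul_eq_mul, mul_one]
      norm_num
  | append_singleton α c ih =>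
      intro hlen
      have hlen' : (α ++ [c]).length = α.length + 1 := by simp
      rw [hlen'] at hlen
      have hm : α.length < N := hlen
      simp only [qwt_snoc]
      have expand : ∀ σ : Fin N → Bool,
          qwt b (sig σ) α * (1 + sgn c * (sig σ α.length * b α))
            = qwt b (sig σ) α + (sgn c * b α) * (qwt b (sig σ) α * sig σ α.length) := by
        intro σ; ring
      rw [Finset.sum_congr rfl fun σ _ => expand σ, Finset.sum_add_distrib, ← Finset.mul_sum]
      have hzero : ∑ σ : Fin N → Bool, qwt b (sig σ) α * sig σ α.length = 0 := by
        set i : Fin N := ⟨α.length, hm⟩ with hi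
        have hinv : Function.Involutive
            (fun σ : Fin N → Bool => Function.update σ i (!σ i)) := by
          intro σ; funext j
          rcases eq_or_ne j i with rfl | hj
          · simp
          · simp [Function.update_of_ne hj]
        have hkey : ∀ σ : Fin N → Bool,
            qwt b (sig (Function.update σ i (!σ i))) α
              * sig (Function.update σ i (!σ i)) α.length
              = - (qwt b (sig σ) α * sig σ α.length) := by
          intro σ
          have h1 : qwt b (sig (Function.update σ i (!σ i))) α = qwt b (sig σ) α := by
            refine qwt_congr fun k hk => ?_
            show (if h : k < N then sgn (Function.update σ i (!σ i) ⟨k, h⟩) else 1)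
              = (if h : k < N then sgn (σ ⟨k, h⟩) else 1)
            have hkN : k < N := hk.trans hm
            rw [dif_pos hkN, dif_pos hkN]
            congr 1
            exact Function.update_of_ne (Fin.ne_of_val_ne (Nat.ne_of_lt hk)) _ _
          have h2 : sig (Function.update σ i (!σ i)) α.length = - sig σ α.length := by
            show (if h : α.length < N then sgn (Function.update σ i (!σ i) ⟨α.length, h⟩) else 1)
              = - (if h : α.length < N then sgn (σ ⟨α.length, h⟩) else 1)
            rw [dif_pos hm, dif_pos hm]
            have hii : (⟨α.length, hm⟩ : Fin N) = i := rfl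
            rw [hii, Function.update_self, sgn_not]
          rw [h1, h2]; ring
        have hcomp : ∑ σ' : Fin N → Bool,
            qwt b (sig (Function.update σ' i (!σ' i))) α
              * sig (Function.update σ' i (!σ' i)) α.length
            = ∑ σ' : Fin N → Bool, qwt b (sig σ') α * sig σ' α.length := by
          have h := Equiv.sum_comp (hinv.toPerm _)
            (fun σ' : Fin N → Bool => qwt b (sig σ') α * sig σ' α.length)
          simpa [Function.Involutive.coe_toPerm] using h
        rw [Finset.sum_congr rfl fun σ' _ => hkey σ'] at hcomp
        rw [Finset.sum_neg_distrib] at hcomp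
        linarith
      rw [hzero, ih hm.le]
      ring

end StatementTenAux

open StatementTenAux in
/-- Lemma 4.1, quantitative form. Let `(h_α)` be a Haar-like system
on `A` in `L₁(μ)` and let `U : L₁ → X` map `(h_α)` into an unconditional basic sequence
with unconditional constant `β`. Then for all finitely supported scalars `(a_α)` with
`|a_α| ≤ δ`, one has `‖U (∑ a_α h_α)‖ ≤ 2 β² ‖U‖ μ(A) δ`. -/
theorem norm_map_haar_le
    (μ : Measure Ω) [IsProbabilityMeasure μ] [NullSingletonClass μ]
    {X : Type*} [NormedAddCommGroup X] [NormedSpace ℝ X] [CompleteSpace X]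
    (A : Set Ω) (hA : MeasurableSet A) (hA0 : 0 < μ A)
    (t : List Bool → Set Ω) (ht : IsTreeOn μ A t)
    (U : Lp ℝ 1 μ →L[ℝ] X) (β : ℝ)
    (hunc : ∀ (s : Finset (List Bool)) (a θ : List Bool → ℝ),
      (∀ α, θ α = 1 ∨ θ α = -1) →
      ‖∑ α ∈ s, (θ α * a α) • U (haarFn μ 1 t ht.meas α)‖ ≤
        β * ‖∑ α ∈ s, a α • U (haarFn μ 1 t ht.meas α)‖) :
    ∀ (s : Finset (List Bool)) (a : List Bool → ℝ) (δ : ℝ), 0 ≤ δ →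
      (∀ α ∈ s, |a α| ≤ δ) →
      ‖U (∑ α ∈ s, a α • haarFn μ 1 t ht.meas α)‖ ≤
        2 * β ^ 2 * ‖U‖ * (μ A).toReal * δ := by
  classical
  intro s a δ hδ ha
  have hUsum : U (∑ α ∈ s, a α • haarFn μ 1 t ht.meas α)
      = ∑ α ∈ s, a α • U (haarFn μ 1 t ht.meas α) := by
    rw [map_sum]
    exact Finset.sum_congr rfl fun α _ => map_smul U _ _
  rw [hUsum]
  by_cases hβneg : β < 0
  · have h1 := hunc s a (fun _ => 1) (fun _ => Or.inl rfl)
    simp only [one_mul] at h1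
    have h2 : ‖∑ α ∈ s, a α • U (haarFn μ 1 t ht.meas α)‖ = 0 := by
      have h3 := norm_nonneg (∑ α ∈ s, a α • U (haarFn μ 1 t ht.meas α))
      nlinarith
    rw [h2]
    have hU0 := norm_nonneg U
    have hμ0 : (0:ℝ) ≤ (μ A).toReal := ENNReal.toReal_nonneg
    have hβ2 : (0:ℝ) ≤ 2 * β ^ 2 := by positivity
    exact mul_nonneg (mul_nonneg (mul_nonneg hβ2 hU0) hμ0) hδ
  push_neg at hβneg
  rcases eq_or_lt_of_le hδ with hδ0 | hδpos
  · have hz : ∀ α ∈ s, a α • U (haarFn μ 1 t ht.meas α) = 0 := by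
      intro α hα
      have h1 : |a α| ≤ 0 := by rw [hδ0]; exact ha α hα
      have h2 : a α = 0 := abs_eq_zero.1 (le_antisymm h1 (abs_nonneg _))
      rw [h2, zero_smul]
    rw [Finset.sum_congr rfl hz, Finset.sum_const_zero, norm_zero, ← hδ0, mul_zero]
  -- main case : 0 ≤ β, 0 < δ
  set b : List Bool → ℝ := fun α => |a α| / δ with hb
  have hb01 : ∀ α ∈ s, 0 ≤ b α ∧ b α ≤ 1 := by
    intro α hα
    refine ⟨div_nonneg (abs_nonneg _) hδ, ?_⟩
    rw [hb]
    simp only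
    rw [div_le_one hδpos]
    exact ha α hα
  -- middle estimate
  have hmid : ‖∑ α ∈ s, b α • U (haarFn μ 1 t ht.meas α)‖
      ≤ 2 * β * ‖U‖ * (μ A).toReal := by
    set N : ℕ := (s.sup fun α : List Bool => α.length) + 1 with hN
    have hsN : ∀ α ∈ s, α.length < N := fun α hα =>
      Nat.lt_succ_of_le (Finset.le_sup (f := fun α : List Bool => α.length) hα)
    set b' : List Bool → ℝ := fun α => if α ∈ s then b α else 0 with hb'
    have hb'01 : ∀ γ, 0 ≤ b' γ ∧ b' γ ≤ 1 := by
      intro γ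
      by_cases h : γ ∈ s
      · simpa [hb', h] using hb01 γ h
      · simp [hb', h]
    set AllN : Finset (List Bool) := (Finset.range N).biUnion Lev with hAllN
    have hsub : s ⊆ AllN := fun α hα => Finset.mem_biUnion.2
      ⟨α.length, Finset.mem_range.2 (hsN α hα), mem_Lev_length α⟩
    have hlenAll : ∀ α ∈ AllN, α.length < N := by
      intro α hα
      obtain ⟨m, hm, hmem⟩ := Finset.mem_biUnion.1 hα
      rw [length_of_mem_Lev hmem]
      exact Finset.mem_range.1 hm
    have hre : ∑ α ∈ s, b α • U (haarFn μ 1 t ht.meas α)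
        = ∑ α ∈ AllN, b' α • U (haarFn μ 1 t ht.meas α) := by
      have h1 : ∑ α ∈ s, b α • U (haarFn μ 1 t ht.meas α)
          = ∑ α ∈ s, b' α • U (haarFn μ 1 t ht.meas α) :=
        Finset.sum_congr rfl fun α hα => by rw [show b' α = b α from if_pos hα]
      rw [h1]
      exact Finset.sum_subset hsub fun α _ hα => by
        rw [show b' α = 0 from if_neg hα, zero_smul]
    have hdisjLev : Set.PairwiseDisjoint ↑(Finset.range N) Lev := by
      intro i _ j _ hij
      simp only [Function.onFun, Finset.disjoint_left]
      intro α hαi hαj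
      exact hij ((length_of_mem_Lev hαi).symm.trans (length_of_mem_Lev hαj))
    have key : ∀ σ : Fin N → Bool,
        ‖∑ α ∈ AllN, (b' α * qwt b' (sig σ) α) • U (haarFn μ 1 t ht.meas α)‖
          ≤ β * (‖U‖ * (2 * (μ A).toReal)) := by
      intro σ
      have h1 := hunc AllN (fun α => sig σ α.length * (b' α * qwt b' (sig σ) α))
        (fun α => sig σ α.length) (fun α => sig_pm σ α.length)
      have hLHS : ∀ α : List Bool,
          sig σ α.length * (sig σ α.length * (b' α * qwt b' (sig σ) α))
            = b' α * qwt b' (sig σ) α := by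
        intro α
        rw [← mul_assoc, sig_sq, one_mul]
      simp only [hLHS] at h1
      have hid : ∑ α ∈ AllN,
          (sig σ α.length * (b' α * qwt b' (sig σ) α)) • U (haarFn μ 1 t ht.meas α)
          = U (Sfun ht b' (sig σ) N - chiInd ht []) := by
        rw [Sfun_eq ht b' (sig σ) N, add_sub_cancel_left, map_sum, hAllN,
          Finset.sum_biUnion hdisjLev]
        refine Finset.sum_congr rfl fun m hm => ?_
        rw [map_sum]
        refine Finset.sum_congr rfl fun α hα => ?_
        rw [_root_.map_smul, length_of_mem_Lev hα]
      rw [hid] at h1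
      refine h1.trans ?_
      have hU := U.le_opNorm (Sfun ht b' (sig σ) N - chiInd ht [])
      have hS := norm_Sfun_sub_le ht hb'01 (sig_abs σ) N
      have h3 : ‖U (Sfun ht b' (sig σ) N - chiInd ht [])‖ ≤ ‖U‖ * (2 * (μ A).toReal) :=
        hU.trans (mul_le_mul_of_nonneg_left hS (norm_nonneg U))
      exact mul_le_mul_of_nonneg_left h3 hβneg
    have havg : (2 ^ N : ℝ) • (∑ α ∈ AllN, b' α • U (haarFn μ 1 t ht.meas α))
        = ∑ σ : Fin N → Bool, ∑ α ∈ AllN,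
            (b' α * qwt b' (sig σ) α) • U (haarFn μ 1 t ht.meas α) := by
      rw [Finset.sum_comm, Finset.smul_sum]
      refine Finset.sum_congr rfl fun α hα => ?_
      rw [← Finset.sum_smul, ← Finset.mul_sum, sum_qwt b' N α (hlenAll α hα).le, smul_smul]
      congr 1
      ring
    have hcard : (Finset.univ : Finset (Fin N → Bool)).card = 2 ^ N := by simp
    have h2N : (0:ℝ) < 2 ^ N := by positivity
    have hfinal : (2 ^ N : ℝ) * ‖∑ α ∈ AllN, b' α • U (haarFn μ 1 t ht.meas α)‖
        ≤ (2 ^ N : ℝ) * (β * (‖U‖ * (2 * (μ A).toReal))) := by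
      calc (2 ^ N : ℝ) * ‖∑ α ∈ AllN, b' α • U (haarFn μ 1 t ht.meas α)‖
          = ‖(2 ^ N : ℝ) • ∑ α ∈ AllN, b' α • U (haarFn μ 1 t ht.meas α)‖ := by
            rw [norm_smul, Real.norm_of_nonneg h2N.le]
        _ = ‖∑ σ : Fin N → Bool, ∑ α ∈ AllN,
              (b' α * qwt b' (sig σ) α) • U (haarFn μ 1 t ht.meas α)‖ := by rw [havg]
        _ ≤ ∑ σ : Fin N → Bool, ‖∑ α ∈ AllN,
              (b' α * qwt b' (sig σ) α) • U (haarFn μ 1 t ht.meas α)‖ := norm_sum_le _ _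
        _ ≤ ∑ _σ : Fin N → Bool, (β * (‖U‖ * (2 * (μ A).toReal))) :=
            Finset.sum_le_sum fun σ _ => key σ
        _ = (2 ^ N : ℝ) * (β * (‖U‖ * (2 * (μ A).toReal))) := by
            rw [Finset.sum_const, hcard, nsmul_eq_mul]
            push_cast
            ring
    rw [hre]
    have hb2 := (mul_le_mul_iff_of_pos_left h2N).mp hfinal
    exact hb2.trans_eq (by ring)
  -- combine
  have hstep1 : ‖∑ α ∈ s, a α • U (haarFn μ 1 t ht.meas α)‖
      ≤ β * ‖∑ α ∈ s, |a α| • U (haarFn μ 1 t ht.meas α)‖ := by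
    have hθ : ∀ α : List Bool,
        (if a α < 0 then (-1:ℝ) else 1) = 1 ∨ (if a α < 0 then (-1:ℝ) else 1) = -1 := by
      intro α; by_cases h : a α < 0 <;> simp [h]
    have h1 := hunc s (fun α => |a α|) (fun α => if a α < 0 then (-1:ℝ) else 1) hθ
    have hcoef : ∀ α : List Bool, ((if a α < 0 then (-1:ℝ) else 1) * |a α|) = a α := by
      intro α
      by_cases h : a α < 0
      · rw [if_pos h, abs_of_neg h]; ring
      · rw [if_neg h, abs_of_nonneg (not_lt.1 h), one_mul]
    simpa only [hcoef] using h1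
  have hstep2 : ∑ α ∈ s, |a α| • U (haarFn μ 1 t ht.meas α)
      = δ • ∑ α ∈ s, b α • U (haarFn μ 1 t ht.meas α) := by
    rw [Finset.smul_sum]
    refine Finset.sum_congr rfl fun α hα => ?_
    rw [smul_smul]
    congr 1
    rw [hb]
    field_simp
  calc ‖∑ α ∈ s, a α • U (haarFn μ 1 t ht.meas α)‖
      ≤ β * ‖∑ α ∈ s, |a α| • U (haarFn μ 1 t ht.meas α)‖ := hstep1
    _ = β * (δ * ‖∑ α ∈ s, b α • U (haarFn μ 1 t ht.meas α)‖) := by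
        rw [hstep2, norm_smul, Real.norm_of_nonneg hδ]
    _ ≤ β * (δ * (2 * β * ‖U‖ * (μ A).toReal)) :=
        mul_le_mul_of_nonneg_left (mul_le_mul_of_nonneg_left hmid hδ) hβneg
    _ = 2 * β ^ 2 * ‖U‖ * (μ A).toReal * δ := by ring
end
end
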